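/- arXiv:1304.1451 — 4 statements merged into one kernel-verified Lean document; each statement's English description precedes it below -/
import Mathlib

section
/- Let 1<p<∞ and let μ be a positive finite Borel measure on the closed unit disk. If there exists C₂>0 such that ∫_{closed 𝔻} |K_λ|^p dμ ≥ C₂ for every λ in the open unit disk, then there exists C₃>0 such that μ(S_I) ≥ C₃·|I| for every arc I of the unit circle. -/
open MeasureTheory Complex Set Metric

noncomputable section

/-- The `p`-th power mean of `f` on the circle of radius `r` (normalized by `2π`). -/
def hIntegral (p : ℝ) (f : ℂ → ℂ) (r : ℝ) : ℝ :=
  (1 / (2 * Real.pi)) *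
    ∫ θ in (0:ℝ)..(2 * Real.pi), ‖f ((r : ℂ) * Complex.exp (θ * Complex.I))‖ ^ p

/-- `‖f‖_p ^ p`, the `p`-th power of the Hardy space `H^p` norm. -/
def hNormPow (p : ℝ) (f : ℂ → ℂ) : ℝ := sSup (hIntegral p f '' Ioo (0:ℝ) 1)

/-- The Hardy space `H^p` norm. -/
def hNorm (p : ℝ) (f : ℂ → ℂ) : ℝ := hNormPow p f ^ (1 / p)

/-- `f` has finite `H^p` norm. -/
def HpFinite (p : ℝ) (f : ℂ → ℂ) : Prop := BddAbove (hIntegral p f '' Ioo (0:ℝ) 1)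

/-- The `H^p` reproducing kernel `k_λ(z) = 1/(1 - conj(λ) z)`. -/
def hker (l : ℂ) : ℂ → ℂ := fun z => 1 / (1 - (starRingEnd ℂ) l * z)

/-- The normalized reproducing kernel `K_λ = k_λ / ‖k_λ‖_p`. -/
def hkerN (p : ℝ) (l : ℂ) : ℂ → ℂ := fun z => hker l z / (hNorm p (hker l) : ℂ)

/-- The arc of the unit circle starting at angle `a` of normalized length `ℓ`. -/
def cArc (a ℓ : ℝ) : Set ℂ :=
  (fun θ : ℝ => Complex.exp (θ * Complex.I)) '' Ico a (a + 2 * Real.pi * ℓ)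

/-- The modified Carleson window `S_{I,h}` over the arc of normalized length `ℓ`
starting at angle `a`, with radial depth `h`. -/
def cWindowH (a ℓ h : ℝ) : Set ℂ :=
  {z : ℂ | 1 - h ≤ ‖z‖ ∧ ‖z‖ ≤ 1 ∧ z / ((‖z‖ : ℝ) : ℂ) ∈ cArc a ℓ}

/-- The Carleson window `S_I`. -/
def cWindow (a ℓ : ℝ) : Set ℂ := cWindowH a ℓ ℓ

/-- Normalized Lebesgue (arclength over `2π`) measure on the unit circle `∂𝔻`. -/
def circM : Measure ℂ :=
  (ENNReal.ofReal (1 / (2 * Real.pi))) •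
    Measure.map (fun θ : ℝ => Complex.exp (θ * Complex.I))
      (volume.restrict (Ico (0:ℝ) (2 * Real.pi)))

end


section AuxProofs
open intervalIntegral


lemma sq_le_helper {a b : ℝ} (ha : 0 ≤ a) (hb : 0 ≤ b) (h : a^2 ≤ b^2) : a ≤ b := by
  nlinarith [sq_nonneg (a - b), sq_nonneg (a + b), mul_nonneg ha hb]

lemma normSq_one_sub (ρ α : ℝ) :
    ‖(1:ℂ) - (ρ:ℂ) * Complex.exp ((α:ℂ) * Complex.I)‖ ^ 2
      = (1-ρ)^2 + 4*ρ*(Real.sin (α/2))^2 := by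
  rw [Complex.sq_norm, Complex.normSq_apply]
  simp only [Complex.sub_re, Complex.sub_im, Complex.one_re, Complex.one_im,
    Complex.mul_re, Complex.mul_im, Complex.ofReal_re, Complex.ofReal_im,
    Complex.exp_ofReal_mul_I_re, Complex.exp_ofReal_mul_I_im]
  have h1 := Real.sin_sq_add_cos_sq α
  have h3 := Real.sin_sq_add_cos_sq (α/2)
  have h4 : Real.cos α = 1 - 2 * Real.sin (α/2)^2 := by
    have h2 := Real.cos_two_mul (α/2)
    have e : 2*(α/2) = α := by ring
    rw [e] at h2
    linear_combination h2 + 2*h3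
  linear_combination (ρ^2) * h1 - 2*ρ*h4

lemma lower4 (ρ α : ℝ) (h0 : 0 ≤ ρ) (h1 : ρ ≤ 1) :
    (1-ρ) + |Real.sin (α/2)| ≤ 4 * ‖(1:ℂ) - (ρ:ℂ) * Complex.exp ((α:ℂ) * Complex.I)‖ := by
  set X := ‖(1:ℂ) - (ρ:ℂ) * Complex.exp ((α:ℂ) * Complex.I)‖ with hX
  have hX0 : 0 ≤ X := norm_nonneg _
  have hsq : X ^ 2 = (1-ρ)^2 + 4*ρ*(Real.sin (α/2))^2 := normSq_one_sub ρ α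
  set s := |Real.sin (α/2)| with hs
  have hs0 : 0 ≤ s := abs_nonneg _
  have hs1 : s ≤ 1 := abs_le.mpr ⟨Real.neg_one_le_sin _, Real.sin_le_one _⟩
  have hsq' : X ^ 2 = (1-ρ)^2 + 4*ρ*s^2 := by rw [hsq, hs, _root_.sq_abs]
  rcases le_or_gt ρ (1/2) with hc | hc
  · have hXge : 1 - ρ ≤ X := sq_le_helper (by linarith) hX0 (by nlinarith)
    nlinarith
  · have h2 : ((1-ρ) + s)^2 ≤ (4*X)^2 := by
      nlinarith [sq_nonneg ((1-ρ) - s), mul_nonneg (by linarith : (0:ℝ) ≤ ρ - 1/2) (sq_nonneg s)]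
    have := sq_le_helper (by linarith) (by linarith) h2
    linarith

lemma upper2 (ρ u : ℝ) (h0 : 0 ≤ ρ) (h1 : ρ ≤ 1) (hu : |u| ≤ 1) :
    ‖(1:ℂ) - (ρ:ℂ) * Complex.exp ((u:ℂ) * Complex.I)‖ ≤ (1-ρ) + 2*|u| := by
  have key : (1:ℂ) - (ρ:ℂ) * Complex.exp ((u:ℂ) * Complex.I)
      = ((1:ℂ) - (ρ:ℂ)) - (ρ:ℂ) * (Complex.exp ((u:ℂ) * Complex.I) - 1) := by ring
  rw [key]
  have habs : ‖(u:ℂ) * Complex.I‖ = |u| := by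
    rw [norm_mul, Complex.norm_real, Real.norm_eq_abs, Complex.norm_I, mul_one]
  have h2 : ‖Complex.exp ((u:ℂ) * Complex.I) - 1‖ ≤ 2 * |u| := by
    calc ‖Complex.exp ((u:ℂ) * Complex.I) - 1‖
        ≤ 2 * ‖(u:ℂ) * Complex.I‖ :=
          Complex.norm_exp_sub_one_le (by rw [habs]; exact hu)
      _ = 2 * |u| := by rw [habs]
  have e1 : ‖(1:ℂ) - (ρ:ℂ)‖ = 1 - ρ := by
    rw [show ((1:ℂ) - (ρ:ℂ)) = ((1-ρ:ℝ):ℂ) by push_cast; ring, Complex.norm_real,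
      Real.norm_eq_abs, _root_.abs_of_nonneg (by linarith : (0:ℝ) ≤ 1 - ρ)]
  have e2 : ‖(ρ:ℂ)‖ = ρ := by
    rw [Complex.norm_real, Real.norm_eq_abs, _root_.abs_of_nonneg h0]
  calc ‖((1:ℂ) - (ρ:ℂ)) - (ρ:ℂ) * (Complex.exp ((u:ℂ) * Complex.I) - 1)‖
      ≤ ‖(1:ℂ) - (ρ:ℂ)‖ + ‖(ρ:ℂ) * (Complex.exp ((u:ℂ) * Complex.I) - 1)‖ := norm_sub_le _ _
    _ ≤ (1-ρ) + 2*|u| := by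
        rw [norm_mul, e1, e2]
        nlinarith [norm_nonneg (Complex.exp ((u:ℂ) * Complex.I) - 1)]

lemma conj_lam (h t : ℝ) :
    (starRingEnd ℂ) (((1-h : ℝ):ℂ) * Complex.exp ((t:ℂ) * Complex.I))
      = ((1-h : ℝ):ℂ) * Complex.exp (((-t : ℝ):ℂ) * Complex.I) := by
  rw [map_mul, Complex.conj_ofReal, ← Complex.exp_conj]
  congr 1
  simp [Complex.conj_ofReal]


lemma abs_sin_ge {v : ℝ} (hv : |v| ≤ Real.pi/2) : 2/Real.pi * |v| ≤ |Real.sin v| := by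
  have hπ := Real.pi_pos
  rcases le_or_gt 0 v with h | h
  · have h1 : |v| = v := abs_of_nonneg h
    have := Real.mul_le_sin (x := v) h (by rw [h1] at hv; exact hv)
    have h2 : Real.sin v ≤ |Real.sin v| := le_abs_self _
    rw [h1]; linarith
  · have h1 : |v| = -v := abs_of_neg h
    have := Real.mul_le_sin (x := -v) (by linarith) (by rw [h1] at hv; linarith)
    rw [Real.sin_neg] at this
    have h2 : -Real.sin v ≤ |Real.sin v| := neg_le_abs _
    rw [h1]; linarith

lemma sin_claim (φ c L : ℝ) (hL0 : 0 ≤ L) (hLπ : L ≤ Real.pi) {θ : ℝ} (hθ : θ ∈ Set.Icc c (c+L)) :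
    ∃ j : ℕ, j ≤ 2 ∧
      |θ - (φ - 2*Real.pi*(((round ((φ - c)/(2*Real.pi)) - 1 : ℤ) : ℝ) + (j:ℝ)))| ≤ Real.pi ∧
      |θ - (φ - 2*Real.pi*(((round ((φ - c)/(2*Real.pi)) - 1 : ℤ) : ℝ) + (j:ℝ)))| / Real.pi
        ≤ |Real.sin ((φ - θ)/2)| := by
  have hπ := Real.pi_pos
  set y := (φ - θ)/(2*Real.pi) with hy
  set k := round y with hk
  have h1 : |y - (k:ℝ)| ≤ 1/2 := abs_sub_round y
  set yc := (φ - c)/(2*Real.pi) with hyc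
  set r0 := round yc with hr0
  have h2 : |yc - (r0:ℝ)| ≤ 1/2 := abs_sub_round yc
  obtain ⟨hθ1, hθ2⟩ := hθ
  have hc1 := abs_le.mp h1
  have hc2 := abs_le.mp h2
  have hyle : y ≤ yc := by
    rw [hy, hyc]
    exact (div_le_div_iff_of_pos_right (by linarith)).mpr (by linarith)
  have hyge : yc - 1/2 ≤ y := by
    have e : yc - y = (θ - c)/(2*Real.pi) := by rw [hy, hyc]; ring
    have h3 : (θ - c)/(2*Real.pi) ≤ 1/2 := by
      rw [div_le_iff₀ (by linarith)]; linarith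
    linarith
  have hklb : (r0 - 1 : ℤ) ≤ k := by
    have h4 : ((r0 - 2 : ℤ) : ℝ) < (k : ℝ) := by push_cast; linarith
    have : (r0 - 2 : ℤ) < k := by exact_mod_cast h4
    omega
  have hkub : k ≤ r0 + 1 := by
    have h4 : (k : ℝ) < ((r0 + 2 : ℤ) : ℝ) := by push_cast; linarith
    have : k < (r0 + 2 : ℤ) := by exact_mod_cast h4
    omega
  set j := (k - (r0 - 1)).toNat with hj
  have hjZ : ((j : ℕ) : ℤ) = k - (r0 - 1) := Int.toNat_of_nonneg (by omega)
  have hjk : ((r0 - 1 : ℤ) : ℝ) + (j:ℝ) = (k:ℝ) := by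
    have : ((j:ℕ) : ℝ) = (((j:ℕ) : ℤ) : ℝ) := by push_cast; ring
    rw [this, hjZ]; push_cast; ring
  have e : θ - (φ - 2*Real.pi*(k:ℝ)) = 2*Real.pi * ((k:ℝ) - y) := by
    rw [hy]; field_simp; ring
  have habs : |θ - (φ - 2*Real.pi*(k:ℝ))| = 2*Real.pi * |(k:ℝ) - y| := by
    rw [e, abs_mul, abs_of_pos (by linarith : (0:ℝ) < 2*Real.pi)]
  have hky : |(k:ℝ) - y| ≤ 1/2 := by rw [abs_sub_comm]; exact h1
  refine ⟨j, by omega, ?_, ?_⟩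
  · rw [hjk, habs]; nlinarith
  · rw [hjk, habs]
    have e2 : (φ - θ)/2 = Real.pi*(y - (k:ℝ)) + (k:ℤ)*Real.pi := by
      rw [hy]; push_cast; field_simp; ring
    rw [e2, Real.sin_add_int_mul_pi, abs_mul]
    have : |((-1:ℝ))^(k:ℤ)| = 1 := by
      rcases Int.even_or_odd k with he | ho
      · rw [he.neg_one_zpow, abs_one]
      · rw [ho.neg_one_zpow, abs_neg, abs_one]
    rw [this, one_mul]
    have hv : |Real.pi*(y - (k:ℝ))| ≤ Real.pi/2 := by
      rw [abs_mul, abs_of_pos hπ]; nlinarith [abs_sub_comm y (k:ℝ) ▸ hky]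
    have h5 := abs_sin_ge hv
    rw [abs_mul, abs_of_pos hπ, abs_sub_comm y ((k:ℝ))] at h5
    calc 2*Real.pi*|(k:ℝ) - y| / Real.pi = 2/Real.pi * (Real.pi * |(k:ℝ)-y|) := by
          field_simp
      _ ≤ |Real.sin (Real.pi*(y-(k:ℝ)))| := h5
    


lemma int_tail (p : ℝ) (hp : 1 < p) (h m : ℝ) (hh : 0 < h) :
    ∫⁻ θ in Set.Icc (m - 5*Real.pi) (m + 5*Real.pi),
        ENNReal.ofReal ((h + |θ - m|/Real.pi) ^ (-p)) ≤
      ENNReal.ofReal (2*Real.pi * h^(1-p)/(p-1)) := by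
  have hπ := Real.pi_pos
  set G : ℝ → ℝ := fun u => (h + |u|/Real.pi) ^ (-p) with hG
  have hbase : ∀ u : ℝ, 0 < h + |u|/Real.pi := fun u => by positivity
  have hGcont : Continuous G := by
    apply Continuous.rpow_const
    · exact continuous_const.add (_root_.continuous_abs.div_const _)
    · intro u; exact Or.inl (ne_of_gt (hbase u))
  have hGnn : ∀ u : ℝ, 0 ≤ G u := fun u => Real.rpow_nonneg (le_of_lt (hbase u)) _
  have hFcont : Continuous (fun θ : ℝ => G (θ - m)) := hGcont.comp (by continuity)
  have hInt : IntegrableOn (fun θ : ℝ => G (θ - m)) (Set.Icc (m - 5*Real.pi) (m + 5*Real.pi)) :=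
    hFcont.integrableOn_Icc
  have e1 : ∫⁻ θ in Set.Icc (m - 5*Real.pi) (m + 5*Real.pi),
      ENNReal.ofReal ((h + |θ - m|/Real.pi) ^ (-p))
      = ENNReal.ofReal (∫ θ in Set.Icc (m - 5*Real.pi) (m + 5*Real.pi), G (θ - m)) :=
    (MeasureTheory.ofReal_integral_eq_lintegral_ofReal hInt
      (Filter.Eventually.of_forall (fun θ => hGnn (θ - m)))).symm
  rw [e1]
  apply ENNReal.ofReal_le_ofReal
  have hab : m - 5*Real.pi ≤ m + 5*Real.pi := by linarith
  have e2 : ∫ θ in Set.Icc (m - 5*Real.pi) (m + 5*Real.pi), G (θ - m)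
      = ∫ θ in (m - 5*Real.pi)..(m + 5*Real.pi), G (θ - m) := by
    rw [MeasureTheory.integral_Icc_eq_integral_Ioc, ← intervalIntegral.integral_of_le hab]
  have e3 : ∫ θ in (m - 5*Real.pi)..(m + 5*Real.pi), G (θ - m)
      = ∫ u in (-(5*Real.pi))..(5*Real.pi), G u := by
    rw [intervalIntegral.integral_comp_sub_right G m]
    congr 1 <;> ring
  have hG1 : IntervalIntegrable G volume (-(5*Real.pi)) 0 := hGcont.intervalIntegrable _ _
  have hG2 : IntervalIntegrable G volume 0 (5*Real.pi) := hGcont.intervalIntegrable _ _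
  have e4 : ∫ u in (-(5*Real.pi))..(5*Real.pi), G u
      = (∫ u in (-(5*Real.pi))..(0:ℝ), G u) + ∫ u in (0:ℝ)..(5*Real.pi), G u :=
    (intervalIntegral.integral_add_adjacent_intervals hG1 hG2).symm
  have e5 : ∫ u in (-(5*Real.pi))..(0:ℝ), G u = ∫ u in (0:ℝ)..(5*Real.pi), G u := by
    have h0 := intervalIntegral.integral_comp_neg (a := (0:ℝ)) (b := 5*Real.pi) (f := G)
    have heq : (fun x : ℝ => G (-x)) = G := by
      funext x; rw [hG]; simp [abs_neg]
    rw [heq, show (-0:ℝ) = 0 from by norm_num] at h0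
    exact h0.symm
  have key : ∫ u in (0:ℝ)..(5*Real.pi), G u ≤ Real.pi * (h^(1-p)/(p-1)) := by
    have e6 : ∫ u in (0:ℝ)..(5*Real.pi), G u
        = ∫ u in (0:ℝ)..(5*Real.pi), (fun v => (h + v)^(-p)) (u/Real.pi) := by
      apply intervalIntegral.integral_congr
      intro u hu
      rw [Set.uIcc_of_le (by positivity : (0:ℝ) ≤ 5*Real.pi)] at hu
      rw [hG]
      simp only
      rw [_root_.abs_of_nonneg hu.1]
    have h5 : 5*Real.pi/Real.pi = (5:ℝ) := by field_simp
    have e7 : ∫ u in (0:ℝ)..(5*Real.pi), (fun v => (h + v)^(-p)) (u/Real.pi)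
        = Real.pi • ∫ v in (0:ℝ)..(5:ℝ), (h + v)^(-p) := by
      rw [intervalIntegral.integral_comp_div (fun v => (h + v)^(-p)) (ne_of_gt hπ),
        zero_div, h5]
    have e8 : ∫ v in (0:ℝ)..(5:ℝ), (h + v)^(-p)
        = ∫ x in h..(5+h), x^(-p) := by
      have hc : ∀ v : ℝ, (h + v)^(-p) = (fun x : ℝ => x^(-p)) (v + h) := fun v => by
        simp only [add_comm]
      simp only [hc]
      rw [intervalIntegral.integral_comp_add_right (fun x : ℝ => x^(-p)) h]
      norm_num
    have e9 : ∫ x in h..(5+h), x^(-p) = ((5+h)^(-p+1) - h^(-p+1))/(-p+1) := by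
      apply integral_rpow
      right
      constructor
      · intro hc; linarith
      · rw [Set.uIcc_of_le (by linarith : h ≤ 5+h)]
        intro hc
        exact absurd hc.1 (by linarith)
    have e10 : ((5+h)^(-p+1) - h^(-p+1))/(-p+1) ≤ h^(1-p)/(p-1) := by
      have hA : (0:ℝ) ≤ (5+h)^(-p+1) := Real.rpow_nonneg (by linarith) _
      have heq : ((5+h)^(-p+1) - h^(-p+1))/(-p+1) = (h^(-p+1) - (5+h)^(-p+1))/(p-1) := by
        rw [div_eq_div_iff (by linarith) (by linarith)]; ring
      rw [heq, show (1:ℝ)-p = -p+1 from by ring]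
      gcongr
      · linarith
    rw [e6, e7, e8, e9, smul_eq_mul]
    exact mul_le_mul_of_nonneg_left e10 (le_of_lt hπ)
  rw [e2, e3, e4, e5]
  have : 2*Real.pi*h^(1-p)/(p-1)
      = Real.pi*(h^(1-p)/(p-1)) + Real.pi*(h^(1-p)/(p-1)) := by ring
  rw [this]
  exact add_le_add key key

lemma norm_hker (l z : ℂ) : ‖hker l z‖ = ‖1 - (starRingEnd ℂ) l * z‖⁻¹ := by
  simp [hker, norm_div]

lemma norm_one_sub_pos {ρ : ℝ} (hρ1 : ρ < 1) (hρ0 : 0 ≤ ρ) (x : ℝ) :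
    0 < ‖(1:ℂ) - (ρ:ℂ) * Complex.exp ((x:ℂ) * Complex.I)‖ := by
  have hw : ‖(ρ:ℂ) * Complex.exp ((x:ℂ) * Complex.I)‖ = ρ := by
    rw [norm_mul, Complex.norm_real, Real.norm_eq_abs, _root_.abs_of_nonneg hρ0,
      Complex.norm_exp_ofReal_mul_I, mul_one]
  have := norm_sub_norm_le (1:ℂ) ((ρ:ℂ) * Complex.exp ((x:ℂ) * Complex.I))
  rw [norm_one, hw] at this
  linarith

lemma hIntegral_lower (p : ℝ) (hp : 1 < p) (h t : ℝ) (hh0 : 0 < h) (hh1 : h ≤ 1/2) :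
    1/(2*Real.pi*(4:ℝ)^p) * h^(1-p)
      ≤ hIntegral p (hker (((1-h:ℝ):ℂ) * Complex.exp ((t:ℂ) * Complex.I))) (1-h) := by
  have hπ := Real.pi_pos
  have hπ3 := Real.pi_gt_three
  have h2π : (0:ℝ) < 2*Real.pi := by linarith
  set l := ((1-h:ℝ):ℂ) * Complex.exp ((t:ℂ) * Complex.I) with hl
  set ρ : ℝ := (1-h)^2 with hρ
  have hρ0 : 0 ≤ ρ := sq_nonneg _
  have hρ1 : ρ ≤ 1 := by nlinarith
  have h1ρ : 1 - ρ ≤ 2*h := by nlinarith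
  have h1ρpos : 0 < 1 - ρ := by nlinarith
  have hid : ∀ θ : ℝ, ‖hker l (((1-h:ℝ):ℂ) * Complex.exp ((θ:ℂ) * Complex.I))‖ ^ p
      = (‖(1:ℂ) - (ρ:ℂ) * Complex.exp (((θ - t:ℝ):ℂ) * Complex.I)‖⁻¹) ^ p := by
    intro θ
    have eexp : Complex.exp (((-t:ℝ):ℂ) * Complex.I) * Complex.exp ((θ:ℂ) * Complex.I)
        = Complex.exp (((θ - t : ℝ):ℂ) * Complex.I) := by
      rw [← Complex.exp_add]; congr 1; push_cast; ring
    have e : (starRingEnd ℂ) l * (((1-h:ℝ):ℂ) * Complex.exp ((θ:ℂ) * Complex.I))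
        = (ρ:ℂ) * Complex.exp (((θ - t:ℝ):ℂ) * Complex.I) := by
      rw [hl, conj_lam]
      calc ((1-h:ℝ):ℂ) * Complex.exp (((-t:ℝ):ℂ) * Complex.I)
            * (((1-h:ℝ):ℂ) * Complex.exp ((θ:ℂ) * Complex.I))
          = (((1-h:ℝ):ℂ) * ((1-h:ℝ):ℂ))
            * (Complex.exp (((-t:ℝ):ℂ) * Complex.I) * Complex.exp ((θ:ℂ) * Complex.I)) := by
            ring
        _ = (ρ:ℂ) * Complex.exp (((θ - t:ℝ):ℂ) * Complex.I) := by
            rw [eexp, hρ]; push_cast; ring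
    rw [norm_hker, e]
  -- choice of subinterval
  set k : ℤ := ⌊t/(2*Real.pi)⌋ with hk
  set t' : ℝ := t - 2*Real.pi*(k:ℝ) with ht'
  have hfl1 : ((k:ℝ)) * (2*Real.pi) ≤ t := (le_div_iff₀ h2π).mp (Int.floor_le _)
  have hfl2 : t < ((k:ℝ)+1) * (2*Real.pi) := (div_lt_iff₀ h2π).mp (Int.lt_floor_add_one _)
  have ht'0 : 0 ≤ t' := by rw [ht']; linarith
  have ht'2π : t' < 2*Real.pi := by rw [ht']; linarith
  set s : ℝ := if t' ≤ Real.pi then t' else t' - h with hs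
  have hs0 : 0 ≤ s := by
    rw [hs]; split_ifs with hc
    · exact ht'0
    · push_neg at hc; linarith
  have hsh : s + h ≤ 2*Real.pi := by
    rw [hs]; split_ifs with hc
    · linarith
    · linarith
  have hdist : ∀ θ ∈ Set.Icc s (s+h), |θ - t'| ≤ h := by
    intro θ hθ
    obtain ⟨hθ1, hθ2⟩ := hθ
    rw [hs] at hθ1 hθ2
    split_ifs at hθ1 hθ2 with hc
    · exact abs_le.mpr ⟨by linarith, by linarith⟩
    · exact abs_le.mpr ⟨by linarith, by linarith⟩
  -- pointwise bound
  have hpt : ∀ θ ∈ Set.Icc s (s+h),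
      ((4*h)⁻¹)^p ≤ (‖(1:ℂ) - (ρ:ℂ) * Complex.exp (((θ - t:ℝ):ℂ) * Complex.I)‖⁻¹) ^ p := by
    intro θ hθ
    have hd := hdist θ hθ
    have hexp : Complex.exp (((θ - t:ℝ):ℂ) * Complex.I)
        = Complex.exp (((θ - t':ℝ):ℂ) * Complex.I) := by
      rw [show (((θ - t:ℝ)):ℂ) * Complex.I
          = (((θ - t':ℝ)):ℂ) * Complex.I + (-k : ℤ) * (2 * (Real.pi:ℂ) * Complex.I) from by
            push_cast [ht']; ring,
        Complex.exp_add, Complex.exp_int_mul_two_pi_mul_I, mul_one]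
    rw [hexp]
    have hub : ‖(1:ℂ) - (ρ:ℂ) * Complex.exp (((θ - t':ℝ):ℂ) * Complex.I)‖ ≤ 4*h := by
      calc ‖(1:ℂ) - (ρ:ℂ) * Complex.exp (((θ - t':ℝ):ℂ) * Complex.I)‖
          ≤ (1-ρ) + 2*|θ - t'| := upper2 ρ (θ - t') hρ0 hρ1 (by linarith)
        _ ≤ 4*h := by linarith
    have hlb := norm_one_sub_pos (by linarith : ρ < 1) hρ0 (θ - t')
    have hinv : (4*h)⁻¹ ≤ ‖(1:ℂ) - (ρ:ℂ) * Complex.exp (((θ - t':ℝ):ℂ) * Complex.I)‖⁻¹ :=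
      inv_anti₀ hlb hub
    exact Real.rpow_le_rpow (by positivity) hinv (by linarith)
  -- continuity
  have hpos2 : ∀ θ : ℝ, (0:ℝ) < ‖(1:ℂ) - (ρ:ℂ) * Complex.exp (((θ - t:ℝ):ℂ) * Complex.I)‖ :=
    fun θ => norm_one_sub_pos (by linarith : ρ < 1) hρ0 (θ - t)
  have hcont : Continuous (fun θ : ℝ =>
      (‖(1:ℂ) - (ρ:ℂ) * Complex.exp (((θ - t:ℝ):ℂ) * Complex.I)‖⁻¹) ^ p) := by
    apply Continuous.rpow_const
    · apply Continuous.inv₀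
      · apply Continuous.norm
        apply Continuous.sub continuous_const
        apply Continuous.mul continuous_const
        apply Complex.continuous_exp.comp
        exact (Complex.continuous_ofReal.comp (continuous_id.sub continuous_const)).mul
          continuous_const
      · exact fun θ => ne_of_gt (hpos2 θ)
    · exact fun θ => Or.inr (by linarith)
  set G2 : ℝ → ℝ := fun θ =>
    (‖(1:ℂ) - (ρ:ℂ) * Complex.exp (((θ - t:ℝ):ℂ) * Complex.I)‖⁻¹) ^ p with hG2
  have hG2nn : ∀ θ, 0 ≤ G2 θ := fun θ => Real.rpow_nonneg (by positivity) _
  have hint : ∀ a b : ℝ, IntervalIntegrable G2 volume a b := fun a b =>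
    hcont.intervalIntegrable a b
  -- split the integral
  have hA := intervalIntegral.integral_add_adjacent_intervals (hint 0 s) (hint s (s+h))
  have hB := intervalIntegral.integral_add_adjacent_intervals (hint 0 (s+h)) (hint (s+h) (2*Real.pi))
  have hnn1 : 0 ≤ ∫ θ in (0:ℝ)..s, G2 θ :=
    intervalIntegral.integral_nonneg hs0 (fun x _ => hG2nn x)
  have hnn2 : 0 ≤ ∫ θ in (s+h)..(2*Real.pi), G2 θ :=
    intervalIntegral.integral_nonneg hsh (fun x _ => hG2nn x)
  have hmid : h * ((4*h)⁻¹)^p ≤ ∫ θ in s..(s+h), G2 θ := by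
    have hmono := intervalIntegral.integral_mono_on (by linarith : s ≤ s+h)
      (intervalIntegrable_const) (hint s (s+h)) hpt
    rw [intervalIntegral.integral_const, smul_eq_mul] at hmono
    calc h * ((4*h)⁻¹)^p = (s + h - s) * ((4*h)⁻¹)^p := by ring_nf
      _ ≤ ∫ θ in s..(s+h), G2 θ := hmono
  have htot : h * ((4*h)⁻¹)^p ≤ ∫ θ in (0:ℝ)..(2*Real.pi), G2 θ := by
    rw [← hB, ← hA]; linarith
  -- arithmetic
  have h4p : (0:ℝ) < (4:ℝ)^p := Real.rpow_pos_of_pos (by norm_num) _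
  have hhp : (0:ℝ) < h^p := Real.rpow_pos_of_pos hh0 _
  have harith : 1/(2*Real.pi*(4:ℝ)^p) * h^(1-p) = (1/(2*Real.pi)) * (h * ((4*h)⁻¹)^p) := by
    rw [Real.inv_rpow (by positivity), Real.mul_rpow (by norm_num) (le_of_lt hh0),
      show (1:ℝ)-p = 1 + (-p) from by ring, Real.rpow_add hh0, Real.rpow_one,
      Real.rpow_neg (le_of_lt hh0)]
    field_simp
  have hIeq : ∫ θ in (0:ℝ)..(2*Real.pi),
      ‖hker l (((1-h:ℝ):ℂ) * Complex.exp ((θ:ℂ) * Complex.I))‖ ^ p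
      = ∫ θ in (0:ℝ)..(2*Real.pi), G2 θ := by
    apply intervalIntegral.integral_congr
    intro θ _
    exact hid θ
  have hfinal : (1/(2*Real.pi)) * (h * ((4*h)⁻¹)^p)
      ≤ (1/(2*Real.pi)) * ∫ θ in (0:ℝ)..(2*Real.pi), G2 θ := by
    apply mul_le_mul_of_nonneg_left htot (by positivity)
  unfold hIntegral
  rw [hIeq, harith]
  exact hfinal

lemma kernel_lintegral_lower (p : ℝ) (hp : 1 < p) (μ : Measure ℂ)
    (C₂ : ℝ) (hC₂ : 0 < C₂)
    (hyp : ∀ l ∈ Metric.ball (0:ℂ) 1,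
      ENNReal.ofReal C₂ ≤ ∫⁻ z, ENNReal.ofReal (‖hkerN p l z‖ ^ p) ∂μ)
    (h t : ℝ) (hh0 : 0 < h) (hh1 : h ≤ 1/2) :
    ENNReal.ofReal (C₂ / (2*Real.pi*(4:ℝ)^p))
      ≤ ∫⁻ z, ENNReal.ofReal (h^(p-1) *
          (‖1 - ((1-h:ℝ):ℂ) * Complex.exp (((-t:ℝ):ℂ) * Complex.I) * z‖⁻¹) ^ p) ∂μ := by
  have hπ := Real.pi_pos
  have hp0 : (0:ℝ) < p := by linarith
  set l := ((1-h:ℝ):ℂ) * Complex.exp ((t:ℂ) * Complex.I) with hl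
  have hnl : ‖l‖ = 1 - h := by
    rw [hl, norm_mul, Complex.norm_real, Real.norm_eq_abs,
      _root_.abs_of_nonneg (by linarith : (0:ℝ) ≤ 1-h),
      Complex.norm_exp_ofReal_mul_I, mul_one]
  have hlb : l ∈ Metric.ball (0:ℂ) 1 := by
    rw [mem_ball_zero_iff, hnl]; linarith
  by_cases hbdd : BddAbove (hIntegral p (hker l) '' Ioo (0:ℝ) 1)
  · -- main case
    have hNlb : 1/(2*Real.pi*(4:ℝ)^p) * h^(1-p) ≤ hNormPow p (hker l) := by
      refine le_trans (hIntegral_lower p hp h t hh0 hh1) (le_csSup hbdd ?_)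
      exact ⟨1-h, ⟨by linarith, by linarith⟩, rfl⟩
    set N := hNormPow p (hker l) with hN
    have hN0 : 0 < N := lt_of_lt_of_le (by positivity) hNlb
    have hNormpos : 0 < hNorm p (hker l) := Real.rpow_pos_of_pos hN0 _
    have hNorm_pow : (hNorm p (hker l)) ^ p = N := by
      rw [hNorm, ← Real.rpow_mul (le_of_lt hN0), one_div_mul_cancel (ne_of_gt hp0),
        Real.rpow_one]
    have hptwise : ∀ z : ℂ,
        ENNReal.ofReal (h^(p-1) * (‖1 - ((1-h:ℝ):ℂ) * Complex.exp (((-t:ℝ):ℂ) * Complex.I) * z‖⁻¹) ^ p)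
        = ENNReal.ofReal (h^(p-1) * N) * ENNReal.ofReal (‖hkerN p l z‖ ^ p) := by
      intro z
      have hnormN : ‖hkerN p l z‖ ^ p
          = (‖1 - (starRingEnd ℂ) l * z‖⁻¹) ^ p / N := by
        simp only [hkerN]
        rw [norm_div, Complex.norm_real, Real.norm_eq_abs, _root_.abs_of_pos hNormpos,
          Real.div_rpow (norm_nonneg _) (le_of_lt hNormpos), hNorm_pow, norm_hker]
      have hconj : (starRingEnd ℂ) l = ((1-h:ℝ):ℂ) * Complex.exp (((-t:ℝ):ℂ) * Complex.I) :=
        conj_lam h t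
      rw [← ENNReal.ofReal_mul (by positivity), hnormN, hconj]
      congr 1
      field_simp
    calc ENNReal.ofReal (C₂ / (2*Real.pi*(4:ℝ)^p))
        ≤ ENNReal.ofReal ((h^(p-1) * N) * C₂) := by
          apply ENNReal.ofReal_le_ofReal
          have h1 : h^(p-1) * h^(1-p) = 1 := by
            rw [← Real.rpow_add hh0]
            norm_num
          have h2 : 1/(2*Real.pi*(4:ℝ)^p) ≤ h^(p-1) * N := by
            have := mul_le_mul_of_nonneg_left hNlb
              (le_of_lt (Real.rpow_pos_of_pos hh0 (p-1)))
            calc 1/(2*Real.pi*(4:ℝ)^p)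
                = h^(p-1) * h^(1-p) * (1/(2*Real.pi*(4:ℝ)^p)) := by rw [h1]; ring
              _ = h^(p-1) * (1/(2*Real.pi*(4:ℝ)^p) * h^(1-p)) := by ring
              _ ≤ h^(p-1) * N := this
          calc C₂ / (2*Real.pi*(4:ℝ)^p) = (1/(2*Real.pi*(4:ℝ)^p)) * C₂ := by ring
            _ ≤ (h^(p-1) * N) * C₂ := mul_le_mul_of_nonneg_right h2 (le_of_lt hC₂)
      _ = ENNReal.ofReal (h^(p-1) * N) * ENNReal.ofReal C₂ := by
          rw [← ENNReal.ofReal_mul (by positivity)]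
      _ ≤ ENNReal.ofReal (h^(p-1) * N) * ∫⁻ z, ENNReal.ofReal (‖hkerN p l z‖ ^ p) ∂μ :=
          mul_le_mul_right (hyp l hlb) _
      _ = ∫⁻ z, ENNReal.ofReal (h^(p-1) * N) * ENNReal.ofReal (‖hkerN p l z‖ ^ p) ∂μ :=
          (lintegral_const_mul' _ _ ENNReal.ofReal_ne_top).symm
      _ = ∫⁻ z, ENNReal.ofReal (h^(p-1) *
            (‖1 - ((1-h:ℝ):ℂ) * Complex.exp (((-t:ℝ):ℂ) * Complex.I) * z‖⁻¹) ^ p) ∂μ := by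
          apply lintegral_congr
          intro z
          exact (hptwise z).symm
  · -- degenerate: hNormPow = 0, contradiction with hypothesis
    exfalso
    have hN : hNormPow p (hker l) = 0 := by
      rw [hNormPow, csSup_of_not_bddAbove hbdd, Real.sSup_empty]
    have hkerN0 : ∀ z : ℂ, ‖hkerN p l z‖ ^ p = 0 := by
      intro z
      simp only [hkerN]
      rw [hNorm, hN, Real.zero_rpow (one_div_ne_zero (ne_of_gt hp0))]
      simp only [Complex.ofReal_zero, div_zero, norm_zero]
      exact Real.zero_rpow (ne_of_gt hp0)
    have h0 := hyp l hlb
    rw [lintegral_congr (fun z => by rw [hkerN0 z, ENNReal.ofReal_zero]), lintegral_zero] at h0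
    exact absurd h0 (not_le.mpr (ENNReal.ofReal_pos.mpr hC₂))

noncomputable def Phi (p h θ : ℝ) (z : ℂ) : ENNReal :=
  ENNReal.ofReal (h^(p-1) *
    (‖1 - ((1-h:ℝ):ℂ) * Complex.exp (((-θ:ℝ):ℂ) * Complex.I) * z‖⁻¹) ^ p)

lemma rpow_neg_anti {a b p : ℝ} (ha : 0 < a) (hab : a ≤ b) (hp : 0 ≤ p) :
    b^(-p) ≤ a^(-p) := by
  rw [Real.rpow_neg (le_of_lt ha), Real.rpow_neg (by linarith)]
  exact inv_anti₀ (Real.rpow_pos_of_pos ha p)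
    (Real.rpow_le_rpow (le_of_lt ha) hab hp)

lemma window_bound (p : ℝ) (hp : 1 < p) (h : ℝ) (hh0 : 0 < h) (hh1 : h < 1)
    (z : ℂ) (hz : ‖z‖ ≤ 1) (c L : ℝ) (hL0 : 0 ≤ L) (hLπ : L ≤ Real.pi) :
    ∫⁻ θ in Set.Icc c (c+L), Phi p h θ z
      ≤ ENNReal.ofReal (6*Real.pi*(4:ℝ)^p/(p-1)) := by
  have hπ := Real.pi_pos
  set w := ((1-h:ℝ):ℂ) * z with hw
  set ρ := ‖w‖ with hρdef
  have hρ0 : 0 ≤ ρ := norm_nonneg _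
  have hρub : ρ ≤ 1 - h := by
    rw [hρdef, hw, norm_mul, Complex.norm_real, Real.norm_eq_abs,
      _root_.abs_of_nonneg (by linarith : (0:ℝ) ≤ 1-h)]
    nlinarith [norm_nonneg z]
  set φ := Complex.arg w with hφ
  have hpolar : ((ρ:ℝ):ℂ) * Complex.exp ((φ:ℂ) * Complex.I) = w := by
    rw [hρdef, hφ]
    exact Complex.norm_mul_exp_arg_mul_I w
  have hrot : ∀ θ:ℝ, (1:ℂ) - ((1-h:ℝ):ℂ) * Complex.exp (((-θ:ℝ):ℂ) * Complex.I) * z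
      = 1 - (ρ:ℂ) * Complex.exp (((φ - θ:ℝ):ℂ) * Complex.I) := by
    intro θ
    congr 1
    calc ((1-h:ℝ):ℂ) * Complex.exp (((-θ:ℝ):ℂ) * Complex.I) * z
        = Complex.exp (((-θ:ℝ):ℂ) * Complex.I) * w := by rw [hw]; ring
      _ = Complex.exp (((-θ:ℝ):ℂ) * Complex.I) * ((ρ:ℂ) * Complex.exp ((φ:ℂ) * Complex.I)) := by
          rw [hpolar]
      _ = (ρ:ℂ) * (Complex.exp (((-θ:ℝ):ℂ) * Complex.I) * Complex.exp ((φ:ℂ) * Complex.I)) := by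
          ring
      _ = (ρ:ℂ) * Complex.exp (((φ - θ:ℝ):ℂ) * Complex.I) := by
          rw [← Complex.exp_add]; congr 2; push_cast; ring
  set m : ℕ → ℝ := fun j =>
    φ - 2*Real.pi*(((round ((φ - c)/(2*Real.pi)) - 1 : ℤ) : ℝ) + (j:ℝ)) with hm
  set K := h^(p-1)*(4:ℝ)^p with hK
  have hK0 : 0 < K := by rw [hK]; positivity
  set T : ℕ → ℝ → ℝ := fun j θ => (h + |θ - m j|/Real.pi)^(-p) with hT
  have hTnn : ∀ j θ, 0 ≤ T j θ := by
    intro j θ; rw [hT]; exact Real.rpow_nonneg (by positivity) _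
  -- pointwise bound
  have key : ∀ θ ∈ Set.Icc c (c+L),
      Phi p h θ z ≤ ENNReal.ofReal (K * (T 0 θ + T 1 θ + T 2 θ)) := by
    intro θ hθ
    obtain ⟨j, hj2, hjπ, hjsin⟩ := sin_claim φ c L hL0 hLπ hθ
    have hjsin' : |θ - m j|/Real.pi ≤ |Real.sin ((φ - θ)/2)| := by
      simpa only [hm] using hjsin
    set s := |Real.sin ((φ - θ)/2)| with hsin
    have hs0 : 0 ≤ s := abs_nonneg _
    have h4 := lower4 ρ (φ - θ) hρ0 (by linarith)
    have hXpos : (0:ℝ) < (h + s)/4 := by positivity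
    have hN : (h + s)/4 ≤ ‖(1:ℂ) - (ρ:ℂ) * Complex.exp (((φ - θ:ℝ):ℂ) * Complex.I)‖ := by
      rw [hsin]; linarith
    have hinv : ‖(1:ℂ) - (ρ:ℂ) * Complex.exp (((φ - θ:ℝ):ℂ) * Complex.I)‖⁻¹
        ≤ ((h + s)/4)⁻¹ := inv_anti₀ hXpos hN
    have hstep1 : (‖(1:ℂ) - (ρ:ℂ) * Complex.exp (((φ - θ:ℝ):ℂ) * Complex.I)‖⁻¹)^p
        ≤ (4:ℝ)^p * (h+s)^(-p) := by
      have e : ((h + s)/4)⁻¹ = 4 * (h+s)⁻¹ := by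
        rw [inv_div]; ring
      calc (‖(1:ℂ) - (ρ:ℂ) * Complex.exp (((φ - θ:ℝ):ℂ) * Complex.I)‖⁻¹)^p
          ≤ (((h + s)/4)⁻¹)^p :=
            Real.rpow_le_rpow (by positivity) hinv (by linarith)
        _ = (4:ℝ)^p * (h+s)^(-p) := by
            rw [e, Real.mul_rpow (by norm_num) (by positivity), Real.inv_rpow (by positivity),
              ← Real.rpow_neg (by positivity)]
    have hstep2 : (h+s)^(-p) ≤ T j θ := by
      rw [hT]
      exact rpow_neg_anti (by positivity) (by rw [hsin]; linarith [hjsin']) (by linarith)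
    have hsum : T j θ ≤ T 0 θ + T 1 θ + T 2 θ := by
      interval_cases j
      · linarith [hTnn 1 θ, hTnn 2 θ]
      · linarith [hTnn 0 θ, hTnn 2 θ]
      · linarith [hTnn 0 θ, hTnn 1 θ]
    rw [Phi, hrot θ]
    apply ENNReal.ofReal_le_ofReal
    have hh1' : 0 ≤ h^(p-1) := Real.rpow_nonneg (le_of_lt hh0) _
    calc h^(p-1) * (‖(1:ℂ) - (ρ:ℂ) * Complex.exp (((φ - θ:ℝ):ℂ) * Complex.I)‖⁻¹)^p
        ≤ h^(p-1) * ((4:ℝ)^p * (T 0 θ + T 1 θ + T 2 θ)) := by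
          apply mul_le_mul_of_nonneg_left ?_ hh1'
          calc (‖(1:ℂ) - (ρ:ℂ) * Complex.exp (((φ - θ:ℝ):ℂ) * Complex.I)‖⁻¹)^p
              ≤ (4:ℝ)^p * (h+s)^(-p) := hstep1
            _ ≤ (4:ℝ)^p * (T j θ) := by
                apply mul_le_mul_of_nonneg_left hstep2 (by positivity)
            _ ≤ (4:ℝ)^p * (T 0 θ + T 1 θ + T 2 θ) := by
                apply mul_le_mul_of_nonneg_left hsum (by positivity)
      _ = K * (T 0 θ + T 1 θ + T 2 θ) := by rw [hK]; ring
  -- far bound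
  have hfar : ∀ θ ∈ Set.Icc c (c+L), ∀ i : ℕ, i ≤ 2 → |θ - m i| ≤ 5*Real.pi := by
    intro θ hθ i hi
    obtain ⟨j, hj2, hjπ, _⟩ := sin_claim φ c L hL0 hLπ hθ
    have hjπ' : |θ - m j| ≤ Real.pi := by simpa only [hm] using hjπ
    have hdij : |m j - m i| ≤ 4*Real.pi := by
      have e : m j - m i = 2*Real.pi*((i:ℝ) - (j:ℝ)) := by rw [hm]; simp only; ring
      rw [e, abs_mul, _root_.abs_of_pos (by linarith : (0:ℝ) < 2*Real.pi)]
      have hi' : (i:ℝ) ≤ 2 := by exact_mod_cast hi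
      have hj' : (j:ℝ) ≤ 2 := by exact_mod_cast hj2
      have hi0 : (0:ℝ) ≤ (i:ℝ) := Nat.cast_nonneg i
      have hj0 : (0:ℝ) ≤ (j:ℝ) := Nat.cast_nonneg j
      have habs : |(i:ℝ) - (j:ℝ)| ≤ 2 := abs_le.mpr ⟨by linarith, by linarith⟩
      nlinarith
    have e2 : θ - m i = (θ - m j) + (m j - m i) := by ring
    rw [e2]
    calc |(θ - m j) + (m j - m i)| ≤ |θ - m j| + |m j - m i| := abs_add_le _ _
      _ ≤ 5*Real.pi := by linarith
  -- measurability
  have hTmeas : ∀ i : ℕ, Measurable (fun θ : ℝ => ENNReal.ofReal (K * T i θ)) := by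
    intro i
    apply Measurable.ennreal_ofReal
    apply Measurable.const_mul
    rw [hT]
    apply Continuous.measurable
    apply Continuous.rpow_const
    · exact continuous_const.add ((_root_.continuous_abs.comp
        (continuous_id.sub continuous_const)).div_const _)
    · intro θ; exact Or.inl (by positivity)
  have hKTnn : ∀ i θ, 0 ≤ K * T i θ := fun i θ => mul_nonneg (le_of_lt hK0) (hTnn i θ)
  have hsum_eq : ∀ θ : ℝ, ENNReal.ofReal (K * (T 0 θ + T 1 θ + T 2 θ))
      = ENNReal.ofReal (K * T 0 θ) + ENNReal.ofReal (K * T 1 θ) + ENNReal.ofReal (K * T 2 θ) := by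
    intro θ
    have e : K * (T 0 θ + T 1 θ + T 2 θ) = (K * T 0 θ + K * T 1 θ) + K * T 2 θ := by ring
    rw [e, ENNReal.ofReal_add (add_nonneg (hKTnn 0 θ) (hKTnn 1 θ)) (hKTnn 2 θ),
      ENNReal.ofReal_add (hKTnn 0 θ) (hKTnn 1 θ)]
  have hpiece : ∀ i : ℕ, i ≤ 2 →
      ∫⁻ θ in Set.Icc c (c+L), ENNReal.ofReal (K * T i θ)
        ≤ ENNReal.ofReal K * ENNReal.ofReal (2*Real.pi * h^(1-p)/(p-1)) := by
    intro i hi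
    have hsub : Set.Icc c (c+L) ⊆ Set.Icc (m i - 5*Real.pi) (m i + 5*Real.pi) := by
      intro θ hθ
      have h1 := abs_le.mp (hfar θ hθ i hi)
      exact ⟨by linarith [h1.1], by linarith [h1.2]⟩
    calc ∫⁻ θ in Set.Icc c (c+L), ENNReal.ofReal (K * T i θ)
        ≤ ∫⁻ θ in Set.Icc (m i - 5*Real.pi) (m i + 5*Real.pi), ENNReal.ofReal (K * T i θ) :=
          lintegral_mono_set hsub
      _ = ENNReal.ofReal K * ∫⁻ θ in Set.Icc (m i - 5*Real.pi) (m i + 5*Real.pi),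
            ENNReal.ofReal (T i θ) := by
          rw [← lintegral_const_mul' _ _ ENNReal.ofReal_ne_top]
          apply lintegral_congr
          intro θ
          rw [← ENNReal.ofReal_mul (le_of_lt hK0)]
      _ ≤ ENNReal.ofReal K * ENNReal.ofReal (2*Real.pi * h^(1-p)/(p-1)) := by
          apply mul_le_mul_right
          have := int_tail p hp h (m i) hh0
          rw [hT]
          exact this
  have hB : ENNReal.ofReal K * ENNReal.ofReal (2*Real.pi * h^(1-p)/(p-1))
      = ENNReal.ofReal (K * (2*Real.pi * h^(1-p)/(p-1))) :=
    (ENNReal.ofReal_mul (le_of_lt hK0)).symm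
  have hcancel : h^(p-1) * h^(1-p) = 1 := by
    rw [← Real.rpow_add hh0]; norm_num
  have hval : K * (2*Real.pi * h^(1-p)/(p-1)) = 2*Real.pi*(4:ℝ)^p/(p-1) := by
    rw [hK]
    calc h^(p-1)*(4:ℝ)^p * (2*Real.pi*h^(1-p)/(p-1))
        = (h^(p-1)*h^(1-p)) * ((4:ℝ)^p*2*Real.pi)/(p-1) := by ring
      _ = 2*Real.pi*(4:ℝ)^p/(p-1) := by rw [hcancel]; ring
  calc ∫⁻ θ in Set.Icc c (c+L), Phi p h θ z
      ≤ ∫⁻ θ in Set.Icc c (c+L),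
          (ENNReal.ofReal (K * T 0 θ) + ENNReal.ofReal (K * T 1 θ)
            + ENNReal.ofReal (K * T 2 θ)) := by
        apply setLIntegral_mono (((hTmeas 0).add (hTmeas 1)).add (hTmeas 2))
        intro θ hθ
        show Phi p h θ z ≤ ENNReal.ofReal (K * T 0 θ) + ENNReal.ofReal (K * T 1 θ) + ENNReal.ofReal (K * T 2 θ)
        rw [← hsum_eq θ]
        exact key θ hθ
    _ = (∫⁻ θ in Set.Icc c (c+L), ENNReal.ofReal (K * T 0 θ))
        + (∫⁻ θ in Set.Icc c (c+L), ENNReal.ofReal (K * T 1 θ))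
        + (∫⁻ θ in Set.Icc c (c+L), ENNReal.ofReal (K * T 2 θ)) := by
        rw [lintegral_add_left (f := fun θ => ENNReal.ofReal (K * T 0 θ) + ENNReal.ofReal (K * T 1 θ)) ((hTmeas 0).add (hTmeas 1)), lintegral_add_left (hTmeas 0)]
    _ ≤ ENNReal.ofReal K * ENNReal.ofReal (2*Real.pi * h^(1-p)/(p-1))
        + ENNReal.ofReal K * ENNReal.ofReal (2*Real.pi * h^(1-p)/(p-1))
        + ENNReal.ofReal K * ENNReal.ofReal (2*Real.pi * h^(1-p)/(p-1)) := by
        gcongr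
        · exact hpiece 0 (by norm_num)
        · exact hpiece 1 (by norm_num)
        · exact hpiece 2 (by norm_num)
    _ = ENNReal.ofReal (2*Real.pi*(4:ℝ)^p/(p-1)) + ENNReal.ofReal (2*Real.pi*(4:ℝ)^p/(p-1))
        + ENNReal.ofReal (2*Real.pi*(4:ℝ)^p/(p-1)) := by rw [hB, hval]
    _ ≤ ENNReal.ofReal (6*Real.pi*(4:ℝ)^p/(p-1)) := by
        have hnn : (0:ℝ) ≤ 2*Real.pi*(4:ℝ)^p/(p-1) :=
          div_nonneg (by positivity) (by linarith)
        rw [← ENNReal.ofReal_add hnn hnn, ← ENNReal.ofReal_add (add_nonneg hnn hnn) hnn]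
        apply ENNReal.ofReal_le_ofReal
        apply le_of_eq
        ring

end AuxProofs

/-- (2) ⟹ (3): if the reverse inequality holds on all normalized reproducing kernels
`K_λ`, then `μ(S_I) ≳ |I|` for every arc `I` of the unit circle. -/
theorem kernel_lower_bound_implies_window_bound (p : ℝ) (hp : 1 < p)
    (μ : Measure ℂ) [IsFiniteMeasure μ] (hsupp : μ (closedBall (0:ℂ) 1)ᶜ = 0)
    (C₂ : ℝ) (hC₂ : 0 < C₂)
    (hker : ∀ l ∈ ball (0:ℂ) 1,
      ENNReal.ofReal C₂ ≤ ∫⁻ z, ENNReal.ofReal (‖hkerN p l z‖ ^ p) ∂μ) :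
    ∃ C₃ > (0:ℝ), ∀ a ℓ : ℝ, 0 < ℓ → ℓ ≤ 1 →
      ENNReal.ofReal (C₃ * ℓ) ≤ μ (cWindow a ℓ) := by
  have hπ := Real.pi_pos
  have hp0 : (0:ℝ) < p := by linarith
  have h4p : (0:ℝ) < (4:ℝ)^p := Real.rpow_pos_of_pos (by norm_num) _
  set c₁ : ℝ := C₂ / (2*Real.pi*(4:ℝ)^p) with hc₁def
  have hc₁ : 0 < c₁ := by rw [hc₁def]; positivity
  set D : ℝ := 6*Real.pi*(4:ℝ)^p/(p-1) with hDdef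
  have hD0 : 0 < D := by rw [hDdef]; apply div_pos (by positivity) (by linarith)
  refine ⟨c₁ * Real.pi / D, by positivity, ?_⟩
  intro a ℓ hℓ0 hℓ1
  set cc := a + Real.pi*ℓ/2 with hcc
  set L := Real.pi*ℓ with hLdef
  have hL0 : 0 ≤ L := by rw [hLdef]; positivity
  have hLπ : L ≤ Real.pi := by rw [hLdef]; nlinarith
  set J := Set.Icc cc (cc + L) with hJ
  set E := (fun θ : ℝ => Complex.exp ((θ:ℂ) * Complex.I)) '' J with hE
  have hEcompact : IsCompact E := isCompact_Icc.image (by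
    apply Complex.continuous_exp.comp
    exact Complex.continuous_ofReal.mul continuous_const)
  have hEmeas : MeasurableSet E := hEcompact.isClosed.measurableSet
  have hEsub : E ⊆ cWindow a ℓ := by
    rintro z ⟨θ, hθJ, rfl⟩
    have habs : ‖Complex.exp ((θ:ℂ) * Complex.I)‖ = 1 :=
      Complex.norm_exp_ofReal_mul_I θ
    obtain ⟨hθ1, hθ2⟩ := hθJ
    rw [hcc] at hθ1
    rw [hcc, hLdef] at hθ2
    refine ⟨by rw [habs]; linarith, by rw [habs], ?_⟩
    rw [habs, Complex.ofReal_one, div_one]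
    exact ⟨θ, ⟨by nlinarith, by nlinarith⟩, rfl⟩
  -- the sequence of scales
  set hn : ℕ → ℝ := fun n => ((n:ℝ)+2)⁻¹ with hhn
  have hn0 : ∀ n, 0 < hn n := fun n => by rw [hhn]; positivity
  have hnhalf : ∀ n, hn n ≤ 1/2 := by
    intro n
    rw [hhn]
    simp only
    rw [show (1:ℝ)/2 = (2:ℝ)⁻¹ from by norm_num]
    exact inv_anti₀ (by norm_num) (by linarith [Nat.cast_nonneg (α := ℝ) n])
  have hnlt1 : ∀ n, hn n < 1 := fun n => lt_of_le_of_lt (hnhalf n) (by norm_num)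
  have htend : Filter.Tendsto hn Filter.atTop (nhds 0) := by
    have h1 : Filter.Tendsto (fun n : ℕ => ((n:ℝ)+2)) Filter.atTop Filter.atTop :=
      Filter.tendsto_atTop_add_const_right _ 2 tendsto_natCast_atTop_atTop
    exact h1.inv_tendsto_atTop
  -- joint measurability
  have hPhimeas : ∀ n, Measurable (Function.uncurry fun (z : ℂ) (θ : ℝ) => Phi p (hn n) θ z) := by
    intro n
    have hcont : Continuous (fun q : ℂ × ℝ =>
        ‖1 - ((1-(hn n):ℝ):ℂ) * Complex.exp (((-q.2:ℝ):ℂ) * Complex.I) * q.1‖) := by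
      apply Continuous.norm
      apply Continuous.sub continuous_const
      apply Continuous.mul ?_ continuous_fst
      apply Continuous.mul continuous_const
      apply Complex.continuous_exp.comp
      exact (Complex.continuous_ofReal.comp continuous_snd.neg).mul continuous_const
    have m1 : Measurable (fun x : ℝ => x ^ p) := by measurability
    exact (((m1.comp hcont.measurable.inv).const_mul _).ennreal_ofReal)
  have hfmeas : ∀ n, Measurable (fun z => ∫⁻ θ in J, Phi p (hn n) θ z) := fun n =>
    Measurable.lintegral_prod_right (hPhimeas n)
  -- Step 1: lower bound
  have hlow : ∀ n, ENNReal.ofReal (c₁ * L) ≤ ∫⁻ z, (∫⁻ θ in J, Phi p (hn n) θ z) ∂μ := by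
    intro n
    have hswap : ∫⁻ z, (∫⁻ θ in J, Phi p (hn n) θ z) ∂μ
        = ∫⁻ θ in J, (∫⁻ z, Phi p (hn n) θ z ∂μ) :=
      lintegral_lintegral_swap ((hPhimeas n).aemeasurable)
    rw [hswap]
    have hper : ∀ θ : ℝ, ENNReal.ofReal c₁ ≤ ∫⁻ z, Phi p (hn n) θ z ∂μ := by
      intro θ
      have := kernel_lintegral_lower p hp μ C₂ hC₂ hker (hn n) θ (hn0 n) (hnhalf n)
      simp only [Phi]
      exact this
    calc ENNReal.ofReal (c₁ * L)
        = ENNReal.ofReal c₁ * volume J := by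
          rw [hJ, Real.volume_Icc, ← ENNReal.ofReal_mul (le_of_lt hc₁)]
          congr 1
          ring
      _ = ∫⁻ _θ in J, ENNReal.ofReal c₁ := (setLIntegral_const J _).symm
      _ ≤ ∫⁻ θ in J, (∫⁻ z, Phi p (hn n) θ z ∂μ) := lintegral_mono (fun θ => hper θ)
  -- a.e. facts
  have haez : ∀ᵐ z ∂μ, ‖z‖ ≤ 1 := by
    rw [MeasureTheory.ae_iff]
    have : {z : ℂ | ¬ ‖z‖ ≤ 1} = (closedBall (0:ℂ) 1)ᶜ := by
      ext z; simp [mem_closedBall_zero_iff]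
    rw [this]
    exact hsupp
  have hbound : ∀ n, (fun z => ∫⁻ θ in J, Phi p (hn n) θ z) ≤ᵐ[μ] fun _ => ENNReal.ofReal D := by
    intro n
    filter_upwards [haez] with z hz
    have := window_bound p hp (hn n) (hn0 n) (hnlt1 n) z hz cc L hL0 hLπ
    rw [hDdef]
    exact this
  have hfin : ∫⁻ _z, ENNReal.ofReal D ∂μ ≠ ⊤ := by
    rw [lintegral_const]
    exact ENNReal.mul_ne_top ENNReal.ofReal_ne_top (measure_ne_top μ _)
  have hrf := MeasureTheory.limsup_lintegral_le (μ := μ)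
    (f := fun n z => ∫⁻ θ in J, Phi p (hn n) θ z)
    (fun _ => ENNReal.ofReal D) hfmeas hbound hfin
  have hlimsup_lb : ENNReal.ofReal (c₁ * L)
      ≤ Filter.limsup (fun n => ∫⁻ z, (∫⁻ θ in J, Phi p (hn n) θ z) ∂μ) Filter.atTop :=
    Filter.le_limsup_of_frequently_le (Filter.Frequently.of_forall hlow)
      (Filter.isBoundedUnder_of ⟨⊤, fun _ => le_top⟩)
  -- pointwise limsup bound
  have hptlim : ∀ᵐ z ∂μ, Filter.limsup (fun n => ∫⁻ θ in J, Phi p (hn n) θ z) Filter.atTop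
      ≤ (E.indicator (fun _ => ENNReal.ofReal D)) z := by
    filter_upwards [haez] with z hz
    by_cases hzE : z ∈ E
    · rw [Set.indicator_of_mem hzE]
      refine Filter.limsup_le_of_le (by isBoundedDefault) (Filter.Eventually.of_forall ?_)
      intro n
      have := window_bound p hp (hn n) (hn0 n) (hnlt1 n) z hz cc L hL0 hLπ
      rw [hDdef]
      exact this
    · rw [Set.indicator_of_notMem hzE]
      -- uniform distance
      have hδex : ∃ δ > (0:ℝ), ∀ θ ∈ J, δ ≤ ‖1 - Complex.exp (((-θ:ℝ):ℂ) * Complex.I) * z‖ := by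
        set g : ℝ → ℝ := fun θ => ‖1 - Complex.exp (((-θ:ℝ):ℂ) * Complex.I) * z‖ with hg
        have hgc : Continuous g := by
          apply Continuous.norm
          apply Continuous.sub continuous_const
          apply Continuous.mul ?_ continuous_const
          apply Complex.continuous_exp.comp
          exact (Complex.continuous_ofReal.comp continuous_neg).mul continuous_const
        have hJne : J.Nonempty := Set.nonempty_Icc.mpr (by linarith)
        obtain ⟨θ₀, hθ₀J, hθ₀min⟩ := isCompact_Icc.exists_isMinOn hJne hgc.continuousOn
        refine ⟨g θ₀, ?_, fun θ hθ => hθ₀min hθ⟩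
        rcases lt_or_eq_of_le (norm_nonneg (1 - Complex.exp (((-θ₀:ℝ):ℂ) * Complex.I) * z)) with hlt | heq
        · exact hlt
        · exfalso
          have h0 : (1:ℂ) - Complex.exp (((-θ₀:ℝ):ℂ) * Complex.I) * z = 0 := by
            rw [← norm_eq_zero]; exact heq.symm
          have hz' : z = Complex.exp ((θ₀:ℂ) * Complex.I) := by
            have h1 : Complex.exp (((-θ₀:ℝ):ℂ) * Complex.I) * z = 1 := by
              linear_combination -h0
            have h2 : Complex.exp ((θ₀:ℂ) * Complex.I) * (Complex.exp (((-θ₀:ℝ):ℂ) * Complex.I) * z)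
                = Complex.exp ((θ₀:ℂ) * Complex.I) := by rw [h1, mul_one]
            rw [← mul_assoc, ← Complex.exp_add] at h2
            rw [show ((θ₀:ℂ) * Complex.I + ((-θ₀:ℝ):ℂ) * Complex.I) = 0 from by push_cast; ring,
              Complex.exp_zero, one_mul] at h2
            exact h2
          exact hzE ⟨θ₀, hθ₀J, hz'.symm⟩
      obtain ⟨δ, hδ0, hδb⟩ := hδex
      -- eventual bound
      have hev : ∀ᶠ n in Filter.atTop,
          (∫⁻ θ in J, Phi p (hn n) θ z)
            ≤ ENNReal.ofReal ((hn n)^(p-1) * (((δ/2)⁻¹)^p * L)) := by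
        have hev0 : ∀ᶠ n in Filter.atTop, hn n < δ/2 := htend.eventually (gt_mem_nhds (by positivity))
        filter_upwards [hev0] with n hnδ
        have hptb : ∀ θ ∈ J, Phi p (hn n) θ z
            ≤ ENNReal.ofReal ((hn n)^(p-1) * ((δ/2)⁻¹)^p) := by
          intro θ hθ
          have hlb : δ/2 ≤ ‖1 - ((1-(hn n):ℝ):ℂ) * Complex.exp (((-θ:ℝ):ℂ) * Complex.I) * z‖ := by
            have e : (1:ℂ) - ((1-(hn n):ℝ):ℂ) * Complex.exp (((-θ:ℝ):ℂ) * Complex.I) * z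
                = (1 - Complex.exp (((-θ:ℝ):ℂ) * Complex.I) * z)
                  + ((hn n:ℝ):ℂ) * (Complex.exp (((-θ:ℝ):ℂ) * Complex.I) * z) := by
              push_cast; ring
            rw [e]
            have h1 := hδb θ hθ
            have h2 : ‖((hn n:ℝ):ℂ) * (Complex.exp (((-θ:ℝ):ℂ) * Complex.I) * z)‖ ≤ hn n := by
              rw [norm_mul, norm_mul, Complex.norm_real, Real.norm_eq_abs,
                _root_.abs_of_pos (hn0 n), Complex.norm_exp_ofReal_mul_I,
                one_mul]
              nlinarith [hn0 n, norm_nonneg z]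
            have h3 := norm_sub_norm_le
              ((1:ℂ) - Complex.exp (((-θ:ℝ):ℂ) * Complex.I) * z)
              (-(((hn n:ℝ):ℂ) * (Complex.exp (((-θ:ℝ):ℂ) * Complex.I) * z)))
            rw [sub_neg_eq_add, norm_neg] at h3
            linarith
          rw [Phi]
          apply ENNReal.ofReal_le_ofReal
          apply mul_le_mul_of_nonneg_left ?_ (Real.rpow_nonneg (le_of_lt (hn0 n)) _)
          apply Real.rpow_le_rpow (by positivity) ?_ (by linarith)
          exact inv_anti₀ (by positivity) hlb
        calc (∫⁻ θ in J, Phi p (hn n) θ z)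
            ≤ ∫⁻ _θ in J, ENNReal.ofReal ((hn n)^(p-1) * ((δ/2)⁻¹)^p) :=
              setLIntegral_mono measurable_const hptb
          _ = ENNReal.ofReal ((hn n)^(p-1) * ((δ/2)⁻¹)^p) * volume J := setLIntegral_const _ _
          _ = ENNReal.ofReal ((hn n)^(p-1) * (((δ/2)⁻¹)^p * L)) := by
              rw [hJ, Real.volume_Icc, show cc + L - cc = L from by ring,
                ← ENNReal.ofReal_mul (by positivity)]
              congr 1
              ring
      have htend2 : Filter.Tendsto
          (fun n => ENNReal.ofReal ((hn n)^(p-1) * (((δ/2)⁻¹)^p * L))) Filter.atTop (nhds 0) := by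
        have ht1 : Filter.Tendsto (fun n => (hn n)^(p-1)) Filter.atTop (nhds 0) := by
          have hc := (Real.continuousAt_rpow_const 0 (p-1) (Or.inr (by linarith))).tendsto
          have := hc.comp htend
          rwa [Real.zero_rpow (by intro hc'; linarith : p - 1 ≠ 0)] at this
        have ht2 := ht1.mul_const (((δ/2)⁻¹)^p * L)
        rw [zero_mul] at ht2
        have := ENNReal.tendsto_ofReal ht2
        rwa [ENNReal.ofReal_zero] at this
      have hle := Filter.limsup_le_limsup hev
      rw [htend2.limsup_eq] at hle
      exact le_trans hle (le_refl 0)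
  -- combine
  have hmain : ENNReal.ofReal (c₁ * L) ≤ ENNReal.ofReal D * μ E := by
    calc ENNReal.ofReal (c₁ * L)
        ≤ Filter.limsup (fun n => ∫⁻ z, (∫⁻ θ in J, Phi p (hn n) θ z) ∂μ) Filter.atTop :=
          hlimsup_lb
      _ ≤ ∫⁻ z, Filter.limsup (fun n => ∫⁻ θ in J, Phi p (hn n) θ z) Filter.atTop ∂μ := hrf
      _ ≤ ∫⁻ z, (E.indicator (fun _ => ENNReal.ofReal D)) z ∂μ := lintegral_mono_ae hptlim
      _ = ENNReal.ofReal D * μ E := by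
          rw [lintegral_indicator hEmeas, setLIntegral_const]
  have hμE : ENNReal.ofReal (c₁ * L / D) ≤ μ E := by
    rw [ENNReal.ofReal_div_of_pos hD0]
    rw [ENNReal.div_le_iff_le_mul (Or.inl (ne_of_gt (ENNReal.ofReal_pos.mpr hD0)))
      (Or.inl ENNReal.ofReal_ne_top)]
    rw [mul_comm (μ E), mul_comm c₁]
    rw [mul_comm c₁] at hmain
    exact hmain
  calc ENNReal.ofReal (c₁ * Real.pi / D * ℓ) = ENNReal.ofReal (c₁ * L / D) := by
        rw [hLdef]; congr 1; ring
    _ ≤ μ E := hμE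
    _ ≤ μ (cWindow a ℓ) := measure_mono hEsub
end

section
/- There exist constants c,C>0 such that for every λ ∈ ℂ, c·e^{2π|Im λ|}/(1+|Im λ|) ≤ ∫_ℝ |sin(π(x−λ))/(π(x−λ))|² dx ≤ C·e^{2π|Im λ|}/(1+|Im λ|). Equivalently, the normalization constant c_λ of the Paley–Wiener reproducing kernel K_λ(z) = c_λ·sin(π(z−λ))/(π(z−λ)) satisfies c_λ² ≍ (1+|Im λ|)e^{−2π|Im λ|}. -/
open MeasureTheory Complex Set

noncomputable section

/-- The normalized cardinal sine `sinc(w) = sin(πw)/(πw)` (with value `1` at `w = 0`). -/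
def pwSinc (w : ℂ) : ℂ :=
  if w = 0 then 1 else Complex.sin (Real.pi * w) / (Real.pi * w)

/-- Membership in the Paley–Wiener space `PW_π`: `F` is the Fourier transform of a
function `g ∈ L²([-π, π])`. -/
def memPW (F : ℂ → ℂ) : Prop :=
  ∃ g : ℝ → ℂ, MemLp g 2 (volume.restrict (Icc (-Real.pi) Real.pi)) ∧
    ∀ z : ℂ, F z = ∫ t in Icc (-Real.pi) Real.pi, g t * Complex.exp (Complex.I * z * t)

/-- `∫_ℝ |sin(π(x-λ))/(π(x-λ))|² dx`, the squared `L²(ℝ)` norm of the (unnormalized)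
Paley–Wiener reproducing kernel at `λ`. -/
def sincNormSq (l : ℂ) : ℝ := ∫ x : ℝ, ‖pwSinc ((x : ℂ) - l)‖ ^ 2

/-- The normalization constant `c_λ` of the Paley–Wiener reproducing kernel. -/
def pwC (l : ℂ) : ℝ := 1 / Real.sqrt (sincNormSq l)

/-- The sequence `x_n = n + 1/8` (`n` even), `x_n = n - 1/8` (`n` odd). -/
def xseq (n : ℤ) : ℝ := if Even n then (n : ℝ) + 1 / 8 else (n : ℝ) - 1 / 8

end


noncomputable section
/-- Pointwise squared modulus of the Paley–Wiener kernel, written out in real terms. -/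
def phi (a b x : ℝ) : ℝ :=
  (Real.sin (Real.pi*(x-a))^2 + Real.sinh (Real.pi*b)^2) / (Real.pi^2 * ((x-a)^2 + b^2))

/-- An integrable majorant of `phi`. -/
def Mj (a b x : ℝ) : ℝ :=
  2*(1+(x-a)^2)⁻¹ + Real.sinh (Real.pi*b)^2/Real.pi^2 * ((x-a)^2+b^2)⁻¹
end

lemma norm_sin_sq (x y : ℝ) : ‖Complex.sin ((x:ℂ) + (y:ℂ)*Complex.I)‖^2
    = Real.sin x ^2 + Real.sinh y ^2 := by
  rw [Complex.sq_norm, Complex.normSq_apply, Complex.sin_add,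
    Complex.sin_mul_I, Complex.cos_mul_I]
  simp only [← Complex.ofReal_sin, ← Complex.ofReal_cos, ← Complex.ofReal_sinh,
    ← Complex.ofReal_cosh, Complex.add_re, Complex.add_im, Complex.mul_re, Complex.mul_im,
    Complex.ofReal_re, Complex.ofReal_im, Complex.I_re, Complex.I_im]
  ring_nf
  nlinarith [Real.sin_sq_add_cos_sq x, Real.cosh_sq y]

lemma phi_eq (l : ℂ) (x : ℝ) (h : (x:ℂ) ≠ l) :
    ‖pwSinc ((x:ℂ) - l)‖^2 = phi l.re l.im x := by
  have hw : (x:ℂ) - l ≠ 0 := sub_ne_zero.mpr h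
  have hpi : ((Real.pi : ℂ)) * ((x:ℂ) - l)
      = ((Real.pi*(x - l.re) : ℝ) : ℂ) + ((-(Real.pi*l.im) : ℝ) : ℂ) * Complex.I := by
    apply Complex.ext <;> simp <;> ring
  rw [pwSinc, if_neg hw, norm_div, div_pow, hpi, norm_sin_sq]
  have hnorm : ‖((Real.pi : ℂ)) * ((x:ℂ) - l)‖^2 = Real.pi^2 * ((x - l.re)^2 + l.im^2) := by
    rw [Complex.sq_norm, Complex.normSq_apply]
    simp [Complex.mul_re, Complex.mul_im]
    ring
  rw [hpi] at hnorm
  rw [hnorm, phi]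
  have : Real.sinh (-(Real.pi * l.im)) ^2 = Real.sinh (Real.pi * l.im)^2 := by
    rw [Real.sinh_neg]; ring
  rw [this]

lemma phi_meas (a b : ℝ) : Measurable (phi a b) := by
  unfold phi; fun_prop

lemma phi_nonneg (a b x : ℝ) : 0 ≤ phi a b x := by
  unfold phi
  apply div_nonneg (by positivity) (by positivity)

lemma cauchy_int (b : ℝ) (hb : b ≠ 0) :
    Integrable (fun y : ℝ => ((y^2 + b^2)⁻¹ : ℝ)) ∧
    (∫ y : ℝ, ((y^2+b^2)⁻¹ : ℝ)) = Real.pi / |b| := by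
  have hfun : (fun y : ℝ => ((y^2 + b^2)⁻¹ : ℝ))
      = fun y : ℝ => (b^2)⁻¹ * ((1 + (y/b)^2)⁻¹) := by
    funext y; field_simp; ring
  constructor
  · rw [hfun]
    exact ((integrable_inv_one_add_sq.comp_div hb).const_mul _)
  · rw [hfun, integral_const_mul]
    rw [MeasureTheory.Measure.integral_comp_div (fun y : ℝ => (1+y^2)⁻¹) b,
      integral_univ_inv_one_add_sq]
    rw [smul_eq_mul, ← _root_.sq_abs b]
    have h0 : |b| ≠ 0 := abs_ne_zero.mpr hb
    field_simp

lemma phi_le_Mj (a b x : ℝ) : phi a b x ≤ Mj a b x := by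
  have hMnn : 0 ≤ Mj a b x := by unfold Mj; positivity
  set y := x - a with hy
  rcases eq_or_lt_of_le (by positivity : (0:ℝ) ≤ y^2 + b^2) with hD | hD
  · unfold phi
    rw [← hy, ← hD, mul_zero, div_zero]
    exact hMnn
  · have hpi := Real.pi_pos
    have hD2 : 0 < Real.pi^2 * (y^2+b^2) := by positivity
    unfold phi Mj
    rw [← hy, add_div]
    have h1 : Real.sin (Real.pi*y)^2 / (Real.pi^2 * (y^2+b^2)) ≤ 2*(1+y^2)⁻¹ := by
      rw [div_le_iff₀ hD2]
      have hs1 : Real.sin (Real.pi*y)^2 ≤ 1 := Real.sin_sq_le_one _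
      have hs2 : Real.sin (Real.pi*y)^2 ≤ (Real.pi*y)^2 := Real.sin_sq_le_sq
      have h1y : (0:ℝ) < 1 + y^2 := by positivity
      rw [show 2*(1+y^2)⁻¹ * (Real.pi^2 * (y^2+b^2)) = 2*(Real.pi^2 * (y^2+b^2))/(1+y^2) by ring,
        le_div_iff₀ h1y]
      have hsy : Real.sin (Real.pi*y)^2 * y^2 ≤ y^2 := by nlinarith [sq_nonneg y]
      have hπ2 : (9:ℝ) ≤ Real.pi^2 := by nlinarith [Real.pi_gt_three]
      nlinarith [sq_nonneg b, sq_nonneg y]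
    have h2 : Real.sinh (Real.pi*b)^2 / (Real.pi^2 * (y^2+b^2))
        = Real.sinh (Real.pi*b)^2/Real.pi^2 * ((y^2+b^2)⁻¹) := by
      rw [← div_div, div_eq_mul_inv]
    rw [h2] at *
    exact add_le_add h1 (le_refl _)

lemma integrable_Mj (a b : ℝ) : Integrable (Mj a b) := by
  have h1 : Integrable (fun x : ℝ => 2*(1+(x-a)^2)⁻¹) :=
    (integrable_inv_one_add_sq.comp_sub_right a).const_mul 2
  rcases eq_or_ne b 0 with hb | hb
  · have : Mj a b = fun x : ℝ => 2*(1+(x-a)^2)⁻¹ := by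
      funext x; unfold Mj; simp [hb]
    rw [this]; exact h1
  · exact h1.add ((((cauchy_int b hb).1.comp_sub_right a).const_mul _))

lemma integral_Mj (a b : ℝ) (hb : b ≠ 0) :
    ∫ x : ℝ, Mj a b x = 2*Real.pi + Real.sinh (Real.pi*b)^2/(Real.pi*|b|) := by
  unfold Mj
  rw [integral_add ((integrable_inv_one_add_sq.comp_sub_right a).const_mul 2)
    (((cauchy_int b hb).1.comp_sub_right a).const_mul _),
    integral_const_mul, integral_const_mul]
  rw [MeasureTheory.integral_sub_right_eq_self (fun y : ℝ => (1+y^2)⁻¹) a,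
    MeasureTheory.integral_sub_right_eq_self (fun y : ℝ => (y^2+b^2)⁻¹) a,
    integral_univ_inv_one_add_sq, (cauchy_int b hb).2]
  have hpi := Real.pi_pos
  field_simp

lemma phi_ae (l : ℂ) :
    (fun x : ℝ => ‖pwSinc ((x:ℂ) - l)‖^2) =ᵐ[volume] phi l.re l.im := by
  have hnull : volume ({l.re} : Set ℝ) = 0 := measure_singleton _
  filter_upwards [compl_mem_ae_iff.mpr hnull] with x hx
  apply phi_eq
  intro hc
  exact hx (by simp [← hc])

lemma sincNormSq_eq (l : ℂ) : sincNormSq l = ∫ x : ℝ, phi l.re l.im x :=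
  integral_congr_ae (phi_ae l)

lemma integrable_phi (a b : ℝ) : Integrable (phi a b) := by
  apply (integrable_Mj a b).mono' (phi_meas a b).aestronglyMeasurable
  filter_upwards with x
  rw [Real.norm_eq_abs, _root_.abs_of_nonneg (phi_nonneg a b x)]
  exact phi_le_Mj a b x

lemma integral_phi_le (a b : ℝ) : ∫ x : ℝ, phi a b x ≤ ∫ x : ℝ, Mj a b x :=
  integral_mono_of_nonneg (Filter.Eventually.of_forall (phi_nonneg a b))
    (integrable_Mj a b) (Filter.Eventually.of_forall (phi_le_Mj a b))

lemma integral_Mj_zero (a : ℝ) : ∫ x : ℝ, Mj a 0 x = 2*Real.pi := by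
  have : Mj a 0 = fun x : ℝ => 2*(fun y : ℝ => (1+y^2)⁻¹) (x - a) := by
    funext x; unfold Mj; simp
  rw [this, integral_const_mul, MeasureTheory.integral_sub_right_eq_self
    (fun y : ℝ => (1+y^2)⁻¹) a, integral_univ_inv_one_add_sq]

lemma lower_small (a b : ℝ) (hb : |b| ≤ 1) :
    1/(10*Real.pi^2) ≤ ∫ x : ℝ, phi a b x := by
  have hpi := Real.pi_pos
  have hconst : ∀ x ∈ Icc (a+1/4) (a+1/2), 2/(5*Real.pi^2) ≤ phi a b x := by
    rintro x ⟨h1, h2⟩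
    set y := x - a with hy
    have hy1 : 1/4 ≤ y := by simp [hy]; linarith
    have hy2 : y ≤ 1/2 := by simp [hy]; linarith
    have hsin : 1/2 ≤ Real.sin (Real.pi*y)^2 := by
      rw [Real.sin_sq_eq_half_sub]
      have : Real.cos (2*(Real.pi*y)) ≤ 0 := by
        apply Real.cos_nonpos_of_pi_div_two_le_of_le <;> nlinarith
      linarith
    have hD : 0 < Real.pi^2*(y^2+b^2) := by
      have h := pow_pos hpi 2
      have hy0 : (0:ℝ) < y := by linarith
      nlinarith [sq_nonneg b, pow_pos hy0 2]
    unfold phi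
    rw [← hy, le_div_iff₀ hD]
    have hb2 : b^2 ≤ 1 := by nlinarith [abs_nonneg b, _root_.sq_abs b]
    have hsh : (0:ℝ) ≤ Real.sinh (Real.pi*b)^2 := sq_nonneg _
    have : 2/(5*Real.pi^2) * (Real.pi^2*(y^2+b^2)) = 2/5*(y^2+b^2) := by
      field_simp
    rw [this]
    nlinarith
  have h1 := MeasureTheory.setIntegral_ge_of_const_le
    (measurableSet_Icc : MeasurableSet (Icc (a+1/4) (a+1/2)))
    (by simp : volume (Icc (a+1/4) (a+1/2)) ≠ ⊤) hconst
    ((integrable_phi a b).integrableOn)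
  have h2 : volume.real (Icc (a+1/4) (a+1/2)) = 1/4 := by
    rw [measureReal_def, Real.volume_Icc]
    norm_num
  rw [h2, smul_eq_mul] at h1
  have h3 := MeasureTheory.setIntegral_le_integral (s := Icc (a+1/4) (a+1/2))
    (integrable_phi a b) (Filter.Eventually.of_forall (phi_nonneg a b))
  have heq : 2/(5*Real.pi^2) * (1/4) = 1/(10*Real.pi^2) := by ring
  linarith [h1, h3]

lemma lower_big (a b : ℝ) (hb : 1 ≤ |b|) :
    Real.sinh (Real.pi*b)^2/(2*Real.pi^2*|b|) ≤ ∫ x : ℝ, phi a b x := by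
  have hpi := Real.pi_pos
  have hb0 : 0 < |b| := by linarith
  have hbsq : b^2 = |b|^2 := (_root_.sq_abs b).symm
  have hconst : ∀ x ∈ Icc a (a+|b|), Real.sinh (Real.pi*b)^2/(2*Real.pi^2*b^2) ≤ phi a b x := by
    rintro x ⟨h1, h2⟩
    set y := x - a with hy
    have hy1 : 0 ≤ y := by simp [hy]; linarith
    have hy2 : y ≤ |b| := by simp [hy]; linarith
    have hy3 : y^2 ≤ b^2 := by nlinarith
    have hpi2 := pow_pos hpi 2
    have hbb : (0:ℝ) < b^2 := by nlinarith
    have hD : 0 < Real.pi^2*(y^2+b^2) := by nlinarith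
    unfold phi
    rw [← hy, div_le_div_iff₀ (by nlinarith) hD]
    have key : Real.sinh (Real.pi*b)^2 * (Real.pi^2*(y^2+b^2))
        ≤ Real.sinh (Real.pi*b)^2 * (Real.pi^2*(2*b^2)) := by
      apply mul_le_mul_of_nonneg_left _ (sq_nonneg _)
      nlinarith
    have h2b : (0:ℝ) ≤ 2*Real.pi^2*b^2 := by positivity
    nlinarith [mul_nonneg (sq_nonneg (Real.sin (Real.pi*y))) h2b, key]
  have h1 := MeasureTheory.setIntegral_ge_of_const_le
    (measurableSet_Icc : MeasurableSet (Icc a (a+|b|)))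
    (by simp : volume (Icc a (a+|b|)) ≠ ⊤) hconst
    ((integrable_phi a b).integrableOn)
  have h2 : volume.real (Icc a (a+|b|)) = |b| := by
    rw [measureReal_def, Real.volume_Icc]
    rw [show a + |b| - a = |b| by ring, ENNReal.toReal_ofReal hb0.le]
  rw [h2, smul_eq_mul] at h1
  have h3 := MeasureTheory.setIntegral_le_integral (s := Icc a (a+|b|))
    (integrable_phi a b) (Filter.Eventually.of_forall (phi_nonneg a b))
  have heq : Real.sinh (Real.pi*b)^2/(2*Real.pi^2*b^2) * |b|
      = Real.sinh (Real.pi*b)^2/(2*Real.pi^2*|b|) := by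
    rw [hbsq, div_mul_eq_mul_div, div_eq_div_iff (by positivity) (by positivity)]
    ring
  linarith [h1, h3]

lemma sinh_le_mul_exp {t : ℝ} (ht : 0 ≤ t) : Real.sinh t ≤ t * Real.exp t := by
  rw [Real.sinh_eq]
  have hEF : Real.exp t * Real.exp (-t) = 1 := by rw [← Real.exp_add]; simp
  have hF2 : Real.exp (-t) ^ 2 = Real.exp (-(2*t)) := by
    rw [sq, ← Real.exp_add]; ring_nf
  have h1 : 1 - 2*t ≤ Real.exp (-t)^2 := by
    rw [hF2]; linarith [Real.add_one_le_exp (-(2*t))]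
  have h4 : (1-2*t)*Real.exp t ≤ Real.exp (-t)^2*Real.exp t :=
    mul_le_mul_of_nonneg_right h1 (Real.exp_pos t).le
  have h3 : Real.exp (-t)^2*Real.exp t = Real.exp (-t) := by
    rw [sq, mul_assoc, mul_comm (Real.exp (-t)) (Real.exp t), hEF, mul_one]
  nlinarith [Real.exp_pos t]

lemma sinh_le_half_exp (t : ℝ) : Real.sinh t ≤ Real.exp t / 2 := by
  rw [Real.sinh_eq]
  nlinarith [Real.exp_pos (-t)]

lemma exp_div4_le_sinh {t : ℝ} (ht : 1 ≤ t) : Real.exp t / 4 ≤ Real.sinh t := by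
  rw [Real.sinh_eq]
  have hEF : Real.exp t * Real.exp (-t) = 1 := by rw [← Real.exp_add]; simp
  have h2 : Real.exp t ^ 2 = Real.exp (2*t) := by
    rw [sq, ← Real.exp_add]; ring_nf
  have h1 : 3 ≤ Real.exp t ^ 2 := by
    rw [h2]; linarith [Real.add_one_le_exp (2*t)]
  have h4 : 3*Real.exp (-t) ≤ Real.exp t^2 * Real.exp (-t) :=
    mul_le_mul_of_nonneg_right h1 (Real.exp_pos (-t)).le
  have h3 : Real.exp t^2*Real.exp (-t) = Real.exp t := by
    rw [sq, mul_assoc, hEF, mul_one]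
  nlinarith [Real.exp_pos (-t)]

set_option maxHeartbeats 2000000 in
/-- Asymptotics of the squared `L²(ℝ)`-norm of the Paley–Wiener reproducing kernel:
`∫_ℝ |sinc(π(x-λ))|² dx ≍ e^{2π|Im λ|}/(1+|Im λ|)`; equivalently the normalization
constant satisfies `c_λ² ≍ (1+|Im λ|) e^{-2π|Im λ|}`. -/
theorem pw_kernel_norm_asymptotics :
    ∃ c C : ℝ, 0 < c ∧ 0 < C ∧ ∀ l : ℂ,
      (c * Real.exp (2 * Real.pi * |l.im|) / (1 + |l.im|) ≤ sincNormSq l ∧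
        sincNormSq l ≤ C * Real.exp (2 * Real.pi * |l.im|) / (1 + |l.im|)) ∧
      (c * ((1 + |l.im|) * Real.exp (-(2 * Real.pi * |l.im|))) ≤ pwC l ^ 2 ∧
        pwC l ^ 2 ≤ C * ((1 + |l.im|) * Real.exp (-(2 * Real.pi * |l.im|)))) := by
  have hpi := Real.pi_pos
  have hpi3 := Real.pi_gt_three
  set c : ℝ := Real.exp (-(2*Real.pi)) / (20*Real.pi^2) with hc_def
  set C : ℝ := 20*Real.pi^2 * Real.exp (2*Real.pi) with hC_def
  have hc : 0 < c := by positivity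
  have hC : 0 < C := by positivity
  have hexp5 : Real.exp (-(2*Real.pi)) * Real.exp (2*Real.pi) = 1 := by
    rw [← Real.exp_add]; simp
  have hcC : c * C = 1 := by
    have h6 : (20*Real.pi^2 : ℝ) ≠ 0 := by positivity
    rw [hc_def, hC_def]
    field_simp
    linear_combination hexp5
  refine ⟨c, C, hc, hC, fun l => ?_⟩
  set a := l.re
  set b := l.im
  set B := |b| with hB_def
  have hB0 : 0 ≤ B := abs_nonneg b
  have h1B : (0:ℝ) < 1 + B := by linarith
  set E : ℝ := Real.exp (2*Real.pi*B) with hE_def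
  have hEp : 0 < E := Real.exp_pos _
  have hE1 : 1 ≤ E := Real.one_le_exp (by positivity)
  have hE1B : 1 + B ≤ E := by
    have := Real.add_one_le_exp (2*Real.pi*B)
    nlinarith
  have hexpsq : Real.exp (Real.pi*B)^2 = E := by
    rw [sq, ← Real.exp_add, hE_def]; ring_nf
  have hsinhB : Real.sinh (Real.pi*b)^2 = Real.sinh (Real.pi*B)^2 := by
    rw [hB_def]
    rcases abs_cases b with ⟨h, _⟩ | ⟨h, _⟩
    · rw [h]
    · rw [h, mul_neg, Real.sinh_neg, neg_sq]
  have hS_eq := sincNormSq_eq l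
  set S := sincNormSq l with hS_def
  -- upper bound
  have hup : S ≤ C * E / (1+B) := by
    rcases eq_or_ne b 0 with hb | hb
    · have h0 : S ≤ 2*Real.pi := by
        rw [hS_eq]
        refine le_trans (integral_phi_le a b) ?_
        rw [hb, integral_Mj_zero]
      have hBz : B = 0 := by rw [hB_def, hb, abs_zero]
      have hEz : E = 1 := by rw [hE_def, hBz, mul_zero, Real.exp_zero]
      rw [le_div_iff₀ h1B, hBz, hEz]
      have hex : (1:ℝ) ≤ Real.exp (2*Real.pi) := Real.one_le_exp (by positivity)
      nlinarith
    · have hBpos : 0 < B := abs_pos.mpr hb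
      have h0 : S ≤ 2*Real.pi + Real.sinh (Real.pi*B)^2/(Real.pi*B) := by
        rw [hS_eq, ← hsinhB]
        exact le_trans (integral_phi_le a b) (le_of_eq (integral_Mj a b hb))
      rcases le_total B 1 with hB1 | hB1
      · have hs : Real.sinh (Real.pi*B) ≤ (Real.pi*B) * Real.exp (Real.pi*B) :=
          sinh_le_mul_exp (by positivity)
        have hsn : 0 ≤ Real.sinh (Real.pi*B) := Real.sinh_nonneg_iff.mpr (by positivity)
        have hsq : Real.sinh (Real.pi*B)^2 ≤ (Real.pi*B)^2 * E := by
          rw [← hexpsq]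
          nlinarith [Real.exp_pos (Real.pi*B)]
        have hterm : Real.sinh (Real.pi*B)^2/(Real.pi*B) ≤ Real.pi*B*E := by
          rw [div_le_iff₀ (by positivity)]
          nlinarith
        rw [le_div_iff₀ h1B]
        have hSb : S ≤ 2*Real.pi + Real.pi*B*E := le_trans h0 (by linarith)
        have hCx : 6*Real.pi ≤ C := by
          rw [hC_def]
          have hex : (1:ℝ) ≤ Real.exp (2*Real.pi) := Real.one_le_exp (by positivity)
          nlinarith
        have hpE : (0:ℝ) ≤ Real.pi*E := by positivity
        have h_a : Real.pi*B*E ≤ Real.pi*E := by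
          calc Real.pi*B*E = (Real.pi*E)*B := by ring
          _ ≤ (Real.pi*E)*1 := mul_le_mul_of_nonneg_left hB1 hpE
          _ = Real.pi*E := mul_one _
        have hB2 : B^2 ≤ 1 := pow_le_one₀ hB0 hB1
        have h_b : Real.pi*B^2*E ≤ Real.pi*E := by
          calc Real.pi*B^2*E = (Real.pi*E)*B^2 := by ring
          _ ≤ (Real.pi*E)*1 := mul_le_mul_of_nonneg_left hB2 hpE
          _ = Real.pi*E := mul_one _
        have h_c : 2*Real.pi*B ≤ 2*Real.pi := by nlinarith
        have h2e : 2*Real.pi ≤ 2*Real.pi*E := by nlinarith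
        have hkey : (2*Real.pi+Real.pi*B*E)*(1+B) ≤ 6*Real.pi*E := by
          have expand : (2*Real.pi+Real.pi*B*E)*(1+B)
              = 2*Real.pi + 2*Real.pi*B + Real.pi*B*E + Real.pi*B^2*E := by ring
          rw [expand]
          linarith
        have m1 := mul_le_mul_of_nonneg_right hSb h1B.le
        have m2 := mul_le_mul_of_nonneg_right hCx hEp.le
        linarith
      · have hs : Real.sinh (Real.pi*B) ≤ Real.exp (Real.pi*B)/2 := sinh_le_half_exp _
        have hsn : 0 ≤ Real.sinh (Real.pi*B) := Real.sinh_nonneg_iff.mpr (by positivity)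
        have hsq : Real.sinh (Real.pi*B)^2 ≤ E/4 := by
          rw [← hexpsq]
          nlinarith [Real.exp_pos (Real.pi*B)]
        have hterm : Real.sinh (Real.pi*B)^2/(Real.pi*B) ≤ E/(4*Real.pi*B) := by
          rw [div_le_div_iff₀ (by positivity) (by positivity)]
          have q1 : Real.sinh (Real.pi*B)^2*(4*Real.pi*B) ≤ (E/4)*(4*Real.pi*B) :=
            mul_le_mul_of_nonneg_right hsq (by positivity)
          have q2 : (E/4)*(4*Real.pi*B) = E*(Real.pi*B) := by ring
          linarith
        have hSb : S ≤ 2*Real.pi + E/(4*Real.pi*B) := le_trans h0 (by linarith)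
        rw [le_div_iff₀ h1B]
        have hq3 : (E/(4*Real.pi*B))*(1+B) ≤ E/(2*Real.pi) := by
          rw [div_mul_eq_mul_div, div_le_div_iff₀ (by positivity) (by positivity)]
          have q4 : E*(1+B) ≤ E*(2*B) := mul_le_mul_of_nonneg_left (by linarith) hEp.le
          have q5 := mul_le_mul_of_nonneg_right q4 (by positivity : (0:ℝ) ≤ 2*Real.pi)
          have q6 : E*(2*B)*(2*Real.pi) = E*(4*Real.pi*B) := by ring
          linarith
        have hq5 : 2*Real.pi*(1+B) ≤ 2*Real.pi*E :=
          mul_le_mul_of_nonneg_left hE1B (by positivity)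
        have hq6 : E/(2*Real.pi) ≤ E := by
          rw [div_le_iff₀ (by positivity)]
          exact le_mul_of_one_le_right hEp.le (by linarith)
        have hCx : 2*Real.pi + 1 ≤ C := by
          rw [hC_def]
          have hex : (1:ℝ) ≤ Real.exp (2*Real.pi) := Real.one_le_exp (by positivity)
          nlinarith
        have m1 := mul_le_mul_of_nonneg_right hSb h1B.le
        have m2 := mul_le_mul_of_nonneg_right hCx hEp.le
        have expand : (2*Real.pi + E/(4*Real.pi*B))*(1+B)
            = 2*Real.pi*(1+B) + (E/(4*Real.pi*B))*(1+B) := by ring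
        rw [expand] at m1
        linarith
  -- lower bound
  have hlow : c * E / (1+B) ≤ S := by
    rcases le_total B 1 with hB1 | hB1
    · have h0 : 1/(10*Real.pi^2) ≤ S := by rw [hS_eq]; exact lower_small a b hB1
      have hEle : E ≤ Real.exp (2*Real.pi) := by
        apply Real.exp_le_exp.mpr; nlinarith
      have hcE : c * E ≤ 1/(20*Real.pi^2) := by
        have h1 : Real.exp (-(2*Real.pi)) * E ≤ 1 := by
          rw [← hexp5]
          exact mul_le_mul_of_nonneg_left hEle (Real.exp_pos _).le
        have h2 : c * E = (Real.exp (-(2*Real.pi)) * E)/(20*Real.pi^2) := by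
          rw [hc_def]; ring
        rw [h2]
        exact (div_le_div_iff_of_pos_right (by positivity)).mpr h1
      have : c*E/(1+B) ≤ c*E := by
        rw [div_le_iff₀ h1B]
        nlinarith [mul_nonneg hc.le hEp.le]
      have h110 : 1/(20*Real.pi^2) ≤ 1/(10*Real.pi^2) := by
        rw [div_le_div_iff₀ (by positivity) (by positivity)]; nlinarith
      linarith
    · have h0 : Real.sinh (Real.pi*B)^2/(2*Real.pi^2*B) ≤ S := by
        rw [hS_eq, ← hsinhB]
        rw [hsinhB]
        exact le_trans (le_of_eq rfl) (by rw [← hsinhB]; exact lower_big a b hB1)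
      have hBpos : 0 < B := by linarith
      have hs : Real.exp (Real.pi*B)/4 ≤ Real.sinh (Real.pi*B) :=
        exp_div4_le_sinh (by nlinarith)
      have hsq : E/16 ≤ Real.sinh (Real.pi*B)^2 := by
        rw [← hexpsq]
        nlinarith [Real.exp_pos (Real.pi*B)]
      have h2 : E/(32*Real.pi^2*B) ≤ Real.sinh (Real.pi*B)^2/(2*Real.pi^2*B) := by
        rw [div_le_div_iff₀ (by positivity) (by positivity)]
        nlinarith [mul_le_mul_of_nonneg_right hsq (by positivity : (0:ℝ) ≤ 2*Real.pi^2*B)]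
      have hexp7 : (7:ℝ) ≤ Real.exp (2*Real.pi) := by
        nlinarith [Real.add_one_le_exp (2*Real.pi)]
      have hc7 : c ≤ 1/(140*Real.pi^2) := by
        rw [hc_def, div_le_div_iff₀ (by positivity) (by positivity)]
        have h5 : Real.exp (-(2*Real.pi)) * Real.exp (2*Real.pi) = 1 := by
          rw [← Real.exp_add]; simp
        nlinarith [Real.exp_pos (-(2*Real.pi))]
      have h3 : c*E/(1+B) ≤ E/(32*Real.pi^2*B) := by
        rw [div_le_div_iff₀ h1B (by positivity)]
        have h6 : c*(32*Real.pi^2*B) ≤ (32/140)*B := by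
          have q1 := mul_le_mul_of_nonneg_right hc7
            (by positivity : (0:ℝ) ≤ 32*Real.pi^2*B)
          have q2 : (1/(140*Real.pi^2))*(32*Real.pi^2*B) = 32/140*B := by
            field_simp
          linarith
        have h7 : E*(c*(32*Real.pi^2*B)) ≤ E*((32/140)*B) :=
          mul_le_mul_of_nonneg_left h6 hEp.le
        have h8 : E*((32/140)*B) ≤ E*(1+B) :=
          mul_le_mul_of_nonneg_left (by linarith) hEp.le
        have h9 : c*E*(32*Real.pi^2*B) = E*(c*(32*Real.pi^2*B)) := by ring
        linarith
      linarith
  -- pwC part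
  have hSpos : 0 < S := lt_of_lt_of_le (by positivity) hlow
  have hpwC : pwC l ^ 2 = S⁻¹ := by
    rw [pwC, div_pow, one_pow, Real.sq_sqrt hSpos.le, one_div]
  have hEneg : Real.exp (-(2*Real.pi*B)) = E⁻¹ := by rw [hE_def, Real.exp_neg]
  constructor
  · exact ⟨hlow, hup⟩
  constructor
  · rw [hpwC, hEneg]
    have h1 : S⁻¹ ≥ (C*E/(1+B))⁻¹ := by
      apply inv_anti₀ (by positivity) hup
    have h2 : (C*E/(1+B))⁻¹ = c*((1+B)*E⁻¹) := by
      rw [inv_div]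
      rw [div_eq_mul_inv, mul_inv, eq_inv_of_mul_eq_one_left hcC]; ring
    linarith [h2 ▸ h1]
  · rw [hpwC, hEneg]
    have h1 : S⁻¹ ≤ (c*E/(1+B))⁻¹ := by
      apply inv_anti₀ (by positivity) hlow
    have h2 : (c*E/(1+B))⁻¹ = C*((1+B)*E⁻¹) := by
      rw [inv_div]
      rw [div_eq_mul_inv, mul_inv, eq_inv_of_mul_eq_one_right hcC]; ring
    linarith [h2 ▸ h1]
end

section
/- Let x_n = n+1/8 for n even and x_n = n−1/8 for n odd, n ∈ ℤ∖{0}. There exists δ>0 such that for every λ ∈ ℂ with |Im λ| ≤ 1 there exists n ∈ ℤ∖{0} with |sin(π(x_n−λ))/(π(x_n−λ))| ≥ δ; one may take x_n to be a point of the sequence closest to λ. -/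
open MeasureTheory Complex Set

private lemma sin_re_eq (z : ℂ) : (Complex.sin z).re = Real.sin z.re * Real.cosh z.im := by
  rw [← Complex.re_add_im z, Complex.sin_add, Complex.cos_mul_I, Complex.sin_mul_I]
  simp [Complex.add_re, Complex.mul_re, Complex.sin_ofReal_re, Complex.cosh_ofReal_re,
    Complex.sin_ofReal_im, Complex.cosh_ofReal_im, Complex.cos_ofReal_im, Complex.sinh_ofReal_im]

private lemma norm_sin_ge (z : ℂ) : |Real.sin z.re| ≤ ‖Complex.sin z‖ := by
  calc |Real.sin z.re| ≤ |Real.sin z.re| * Real.cosh z.im :=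
        le_mul_of_one_le_right (abs_nonneg _) (Real.one_le_cosh _)
    _ = |(Complex.sin z).re| := by
        rw [sin_re_eq, abs_mul, abs_of_pos (Real.cosh_pos _)]
    _ ≤ ‖Complex.sin z‖ := by
        exact Complex.abs_re_le_norm _

private lemma abs_sin_int_sub (n : ℤ) (a : ℝ) :
    |Real.sin (Real.pi * ((n : ℝ) - a))| = |Real.sin (Real.pi * a)| := by
  have h1 : Real.pi * ((n : ℝ) - a) = (n : ℝ) * Real.pi - Real.pi * a := by ring
  have hs : Real.sin ((n : ℝ) * Real.pi) = 0 := Real.sin_int_mul_pi n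
  have hc : |Real.cos ((n : ℝ) * Real.pi)| = 1 := by
    have h2 := Real.sin_sq_add_cos_sq ((n : ℝ) * Real.pi)
    rw [hs] at h2
    nlinarith [abs_nonneg (Real.cos ((n:ℝ)*Real.pi)), _root_.sq_abs (Real.cos ((n:ℝ)*Real.pi))]
  rw [h1, Real.sin_sub, hs]
  rw [zero_mul, zero_sub, abs_neg, abs_mul, hc, one_mul]

private lemma key_max (r : ℝ) :
    Real.sin (Real.pi/8)/2 ≤ |Real.sin (Real.pi*(r - 1/8))| ∨
    Real.sin (Real.pi/8)/2 ≤ |Real.sin (Real.pi*(r + 1/8))| := by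
  have hpi := Real.pi_pos
  have hpi4 : Real.pi < 4 := by linarith [Real.pi_lt_d2]
  by_contra h
  push_neg at h
  obtain ⟨hA, hB⟩ := h
  have e1 : Real.pi*(r - 1/8) = Real.pi*r - Real.pi/8 := by ring
  have e2 : Real.pi*(r + 1/8) = Real.pi*r + Real.pi/8 := by ring
  rw [e1, Real.sin_sub, abs_lt] at hA
  rw [e2, Real.sin_add, abs_lt] at hB
  set S := Real.sin (Real.pi * r)
  set C := Real.cos (Real.pi * r)
  set s := Real.sin (Real.pi/8) with hs
  set cp := Real.cos (Real.pi/8) with hcpd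
  have hsq : S^2 + C^2 = 1 := Real.sin_sq_add_cos_sq _
  have hcp : (1:ℝ)/2 < cp := by
    have h3 : Real.cos (Real.pi/3) < Real.cos (Real.pi/8) := by
      apply Real.cos_lt_cos_of_nonneg_of_le_pi (by positivity) (by linarith) (by linarith)
    rw [Real.cos_pi_div_three] at h3; exact h3
  have hsp : 0 < s :=
    Real.sin_pos_of_pos_of_lt_pi (by positivity) (by linarith)
  have hslt : s < 1/2 := by
    have := Real.sin_le (le_of_lt (show (0:ℝ) < Real.pi/8 by positivity))
    rw [← hs] at this
    linarith
  have hCs1 : -(s/2) < C*s := by linarith [hA.2, hB.1]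
  have hCs2 : C*s < s/2 := by linarith [hA.1, hB.2]
  have hC : |C| < 1/2 := by
    rw [abs_lt]; constructor <;> nlinarith
  have hScp1 : -(s/2) < S*cp := by linarith [hA.1, hB.1]
  have hScp2 : S*cp < s/2 := by linarith [hA.2, hB.2]
  have hS : |S| < 1/2 := by
    rw [abs_lt]; constructor <;> nlinarith
  nlinarith [_root_.sq_abs S, _root_.sq_abs C, abs_nonneg S, abs_nonneg C]

private lemma exists_even_near (r : ℝ) : ∃ n : ℤ, n ≠ 0 ∧ Even n ∧ |(n:ℝ) - r| ≤ 3 := by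
  have h := abs_sub_round (r/2)
  by_cases hm : round (r/2) = 0
  · refine ⟨2, by norm_num, even_two, ?_⟩
    rw [hm] at h
    push_cast at h ⊢
    rw [abs_le] at h ⊢
    constructor <;> [linarith [h.2]; linarith [h.1]]
  · refine ⟨2 * round (r/2), by simpa using hm, even_two_mul _, ?_⟩
    push_cast
    have : (2:ℝ) * (round (r/2)) - r = 2 * ((r/2 - round (r/2)) * (-1)) := by ring
    rw [this, abs_mul, abs_mul, abs_neg, abs_one, mul_one]
    rw [show |(2:ℝ)| = 2 from by norm_num]
    nlinarith [abs_nonneg (r/2 - (round (r/2):ℝ))]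

private lemma exists_odd_near (r : ℝ) : ∃ n : ℤ, n ≠ 0 ∧ ¬ Even n ∧ |(n:ℝ) - r| ≤ 3 := by
  refine ⟨2 * round ((r-1)/2) + 1, ?_, ?_, ?_⟩
  · omega
  · simp [Int.even_add_one, parity_simps]
  · have h := abs_sub_round ((r-1)/2)
    push_cast
    have : (2:ℝ) * (round ((r-1)/2)) + 1 - r = 2 * (((r-1)/2 - round ((r-1)/2)) * (-1)) := by ring
    rw [this, abs_mul, abs_mul, abs_neg, abs_one, mul_one,
      show |(2:ℝ)| = 2 from by norm_num]
    nlinarith [abs_nonneg ((r-1)/2 - (round ((r-1)/2):ℝ))]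

/-- Near the real axis, some point of the sequence (one may take a closest one) sees the
sinc kernel bounded below: there is `δ > 0` such that for every `λ` with `|Im λ| ≤ 1`
there is `n ≠ 0` with `|sinc(π(x_n-λ))| ≥ δ`. -/
theorem pw_sinc_lower_bound_near_axis :
    ∃ δ > (0:ℝ), ∀ l : ℂ, |l.im| ≤ 1 →
      ∃ n : ℤ, n ≠ 0 ∧ δ ≤ ‖pwSinc ((xseq n : ℂ) - l)‖ := by
  have hpi := Real.pi_pos
  have hsp : 0 < Real.sin (Real.pi/8) :=
    Real.sin_pos_of_pos_of_lt_pi (by positivity) (by nlinarith)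
  refine ⟨Real.sin (Real.pi/8) / (10 * Real.pi), by positivity, ?_⟩
  intro l him
  set r := l.re with hr
  -- pick n with right parity, nonzero, close to r, and good sin bound
  obtain ⟨n, hn0, hnx, hnr⟩ :
      ∃ n : ℤ, n ≠ 0 ∧ Real.sin (Real.pi/8)/2 ≤ |Real.sin (Real.pi * (xseq n - r))| ∧
        |xseq n - r| ≤ 4 := by
    rcases key_max r with hk | hk
    · obtain ⟨n, hn0, hev, hnear⟩ := exists_even_near r
      refine ⟨n, hn0, ?_, ?_⟩
      · have hx : xseq n = (n:ℝ) + 1/8 := if_pos hev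
        have : xseq n - r = (n:ℝ) - (r - 1/8) := by rw [hx]; ring
        rw [this, abs_sin_int_sub]
        exact hk
      · have hx : xseq n = (n:ℝ) + 1/8 := if_pos hev
        rw [hx]
        have : (n:ℝ) + 1/8 - r = ((n:ℝ) - r) + 1/8 := by ring
        rw [this]
        calc |((n:ℝ) - r) + 1/8| ≤ |(n:ℝ) - r| + |1/8| := abs_add_le _ _
          _ ≤ 3 + 1/8 := by
              rw [show |(1/8:ℝ)| = 1/8 from by norm_num]; linarith
          _ ≤ 4 := by norm_num
    · obtain ⟨n, hn0, hev, hnear⟩ := exists_odd_near r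
      refine ⟨n, hn0, ?_, ?_⟩
      · have hx : xseq n = (n:ℝ) - 1/8 := if_neg hev
        have : xseq n - r = (n:ℝ) - (r + 1/8) := by rw [hx]; ring
        rw [this, abs_sin_int_sub]
        exact hk
      · have hx : xseq n = (n:ℝ) - 1/8 := if_neg hev
        rw [hx]
        have : (n:ℝ) - 1/8 - r = ((n:ℝ) - r) + (-(1/8)) := by ring
        rw [this]
        calc |((n:ℝ) - r) + (-(1/8))| ≤ |(n:ℝ) - r| + |(-(1/8):ℝ)| := abs_add_le _ _
          _ ≤ 3 + 1/8 := by
              rw [show |(-(1/8):ℝ)| = 1/8 from by norm_num]; linarith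
          _ ≤ 4 := by norm_num
  refine ⟨n, hn0, ?_⟩
  set w : ℂ := (xseq n : ℂ) - l with hw
  have hwre : w.re = xseq n - r := by simp [hw, hr]
  have hwim : w.im = -l.im := by simp [hw]
  have hre0 : w.re ≠ 0 := by
    intro h
    rw [hwre] at h
    rw [h, mul_zero, Real.sin_zero, abs_zero] at hnx
    have : 0 < Real.sin (Real.pi/8)/2 := by positivity
    linarith
  have hw0 : w ≠ 0 := fun h => hre0 (by rw [h]; rfl)
  rw [pwSinc, if_neg hw0]
  have hrePiW : ((Real.pi : ℂ) * w).re = Real.pi * w.re := by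
    simp [Complex.mul_re]
  have hnum : Real.sin (Real.pi/8)/2 ≤ ‖Complex.sin ((Real.pi :ℂ) * w)‖ := by
    calc Real.sin (Real.pi/8)/2 ≤ |Real.sin (Real.pi * (xseq n - r))| := hnx
      _ = |Real.sin (((Real.pi:ℂ) * w).re)| := by rw [hrePiW, hwre]
      _ ≤ ‖Complex.sin ((Real.pi:ℂ) * w)‖ := norm_sin_ge _
  have hden : ‖(Real.pi : ℂ) * w‖ ≤ 5 * Real.pi := by
    rw [norm_mul]
    have h1 : ‖(Real.pi : ℂ)‖ = Real.pi := by
      rw [Complex.norm_real, Real.norm_eq_abs, abs_of_pos hpi]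
    rw [h1]
    have h2 : ‖w‖ ≤ 5 := by
      calc ‖w‖ ≤ |w.re| + |w.im| := Complex.norm_le_abs_re_add_abs_im w
        _ ≤ 4 + 1 := by rw [hwre, hwim, abs_neg]; exact add_le_add hnr him
        _ = 5 := by norm_num
    calc Real.pi * ‖w‖ ≤ Real.pi * 5 := by nlinarith
      _ = 5 * Real.pi := by ring
  have hdenpos : (0:ℝ) < ‖(Real.pi : ℂ) * w‖ := by
    have : (Real.pi : ℂ) * w ≠ 0 := by
      apply mul_ne_zero _ hw0
      simpa using hpi.ne'
    exact norm_pos_iff.mpr this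
  rw [norm_div]
  calc Real.sin (Real.pi/8) / (10 * Real.pi)
      = (Real.sin (Real.pi/8)/2) / (5 * Real.pi) := by ring
    _ ≤ ‖Complex.sin ((Real.pi:ℂ) * w)‖ / ‖(Real.pi : ℂ) * w‖ := by
        apply div_le_div₀ (norm_nonneg _) hnum hdenpos hden
end

section
/- Let x_n = n+1/8 for n even and x_n = n−1/8 for n odd, n ∈ ℤ∖{0}, and let μ = Σ_{n≠0} δ_{x_n}. There exists δ>0 such that for every λ ∈ ℂ, Σ_{n≠0} |K_λ(x_n)|² ≥ δ, where K_λ(z) = c_λ·sin(π(z−λ))/(π(z−λ)) is the L²(ℝ)-normalized reproducing kernel of the Paley–Wiener space PW_π (c_λ = ‖sin(π(·−λ))/(π(·−λ))‖_{L²(ℝ)}^{−1}). That is, the L²(μ)-norms of the normalized reproducing kernels of PW_π are uniformly bounded below. -/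
open MeasureTheory Complex Set

namespace PWAux

noncomputable def GB (l : ℂ) (x : ℝ) : ℝ :=
  2 / (1 + (x - l.re) ^ 2) +
    (Real.sinh (Real.pi * |l.im|) ^ 2 / Real.pi ^ 2) * ((x - l.re) ^ 2 + |l.im| ^ 2)⁻¹

lemma normsq_sin (a b : ℝ) :
    ‖Complex.sin ((a:ℂ) + (b:ℂ) * I)‖ ^ 2 = Real.sin a ^ 2 + Real.sinh b ^ 2 := by
  rw [Complex.sin_add_mul_I]
  rw [← Complex.ofReal_sin, ← Complex.ofReal_cosh, ← Complex.ofReal_cos, ← Complex.ofReal_sinh,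
    ← Complex.ofReal_mul, ← Complex.ofReal_mul]
  rw [Complex.sq_norm, Complex.normSq_add_mul_I]
  have h1 := Real.sin_sq_add_cos_sq a
  have h2 := Real.cosh_sq b
  nlinarith [Real.sinh_sq b]

lemma pwSinc_normSq (w : ℂ) (hw : w ≠ 0) :
    ‖pwSinc w‖ ^ 2 =
      (Real.sin (Real.pi * w.re) ^ 2 + Real.sinh (Real.pi * w.im) ^ 2)
        / (Real.pi ^ 2 * (w.re ^ 2 + w.im ^ 2)) := by
  have hpw : ((Real.pi : ℂ) * w) = ((Real.pi * w.re : ℝ) : ℂ) + ((Real.pi * w.im : ℝ) : ℂ) * I := by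
    simp [Complex.ext_iff]
  rw [pwSinc, if_neg hw, norm_div, div_pow, hpw, normsq_sin]
  congr 1
  rw [← hpw, Complex.sq_norm, Complex.normSq_mul]
  simp [Complex.normSq_apply, Complex.normSq_ofReal]
  ring

lemma fP_eq (l : ℂ) (x : ℝ) (hx : (x:ℂ) - l ≠ 0) :
    ‖pwSinc ((x:ℂ) - l)‖ ^ 2 =
      (Real.sin (Real.pi * (x - l.re)) ^ 2 + Real.sinh (Real.pi * |l.im|) ^ 2)
        / (Real.pi ^ 2 * ((x - l.re) ^ 2 + |l.im| ^ 2)) := by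
  have hre : (((x:ℂ) - l).re) = x - l.re := by simp
  have him : (((x:ℂ) - l).im) = -l.im := by simp
  rw [pwSinc_normSq _ hx, hre, him]
  have h1 : Real.sinh (Real.pi * -l.im) ^ 2 = Real.sinh (Real.pi * |l.im|) ^ 2 := by
    rcases abs_cases l.im with ⟨h, _⟩ | ⟨h, _⟩ <;> rw [h] <;>
      simp [mul_neg, Real.sinh_neg, neg_sq]
  rw [h1, neg_sq, _root_.sq_abs]

lemma sub_ne_zero_iff' (l : ℂ) (x : ℝ) : (x:ℂ) - l ≠ 0 ↔ ¬(x = l.re ∧ l.im = 0) := by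
  rw [sub_ne_zero]
  constructor
  · rintro h ⟨h1, h2⟩
    exact h (Complex.ext (by simp [h1]) (by simp [h2]))
  · intro h he
    exact h ⟨by rw [← he]; simp, by rw [← he]; simp⟩

lemma sin_piece_le (t v : ℝ) (h : t ^ 2 + v ^ 2 ≠ 0) :
    Real.sin (Real.pi * t) ^ 2 / (Real.pi ^ 2 * (t ^ 2 + v ^ 2)) ≤ 2 / (1 + t ^ 2) := by
  have hpi := Real.pi_gt_three
  have hden : 0 < Real.pi ^ 2 * (t ^ 2 + v ^ 2) := by
    apply mul_pos (by positivity)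
    rcases (lt_or_gt_of_ne h) with h' | h'
    · nlinarith [sq_nonneg t, sq_nonneg v]
    · exact h'
  have hd2 : 0 < 1 + t ^ 2 := by positivity
  rw [div_le_div_iff₀ hden hd2]
  rcases eq_or_ne t 0 with rfl | ht
  · simp
    positivity
  · have hsle : Real.sin (Real.pi * t) ^ 2 ≤ 1 := by
      have := Real.neg_one_le_sin (Real.pi * t)
      have := Real.sin_le_one (Real.pi * t)
      nlinarith
    have habs : |Real.sin (Real.pi * t)| ≤ |Real.pi * t| := Real.abs_sin_le_abs
    have hsq : Real.sin (Real.pi * t) ^ 2 ≤ Real.pi ^ 2 * t ^ 2 := by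
      have := _root_.sq_abs (Real.sin (Real.pi * t))
      nlinarith [abs_nonneg (Real.sin (Real.pi * t)), abs_nonneg (Real.pi * t), _root_.sq_abs (Real.pi * t)]
    have ht2 : 0 < t ^ 2 := by positivity
    rcases le_total (t ^ 2) 1 with hc | hc
    · nlinarith [sq_nonneg v, Real.sin_sq_le_one (Real.pi * t)]
    · have h9 : (9:ℝ) < Real.pi ^ 2 := by nlinarith
      nlinarith [sq_nonneg v, sq_nonneg (Real.sin (Real.pi * t)),
        mul_nonneg (sub_nonneg.2 hsle) (le_of_lt hd2)]

lemma fP_le_G (l : ℂ) (x : ℝ) : ‖pwSinc ((x:ℂ) - l)‖ ^ 2 ≤ GB l x := by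
  rcases eq_or_ne ((x:ℂ) - l) 0 with hw | hw
  · have hx : x = l.re ∧ l.im = 0 := by
      by_contra hc
      exact (sub_ne_zero_iff' l x).2 hc hw
    rw [hw]
    simp only [pwSinc, if_pos rfl, norm_one, one_pow, GB, hx.1, hx.2]
    simp
  · rw [fP_eq l x hw, add_div, GB]
    have hne : (x - l.re) ^ 2 + |l.im| ^ 2 ≠ 0 := by
      intro h0
      have h1 : x - l.re = 0 := by nlinarith [sq_nonneg (x - l.re), sq_nonneg |l.im|, abs_nonneg l.im]
      have h2 : |l.im| = 0 := by nlinarith [sq_nonneg (x - l.re), sq_nonneg |l.im|, abs_nonneg l.im]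
      exact (sub_ne_zero_iff' l x).1 hw ⟨by linarith, abs_eq_zero.1 h2⟩
    refine add_le_add (sin_piece_le _ _ hne) (le_of_eq ?_)
    rw [div_eq_mul_inv, mul_inv, ← mul_assoc, ← div_eq_mul_inv, div_eq_mul_inv,
      div_eq_mul_inv]

lemma measurable_pwSinc : Measurable pwSinc := by
  unfold pwSinc
  refine Measurable.ite (MeasurableSet.singleton 0) measurable_const ?_
  exact (Complex.measurable_sin.comp (measurable_id.const_mul _)).div
    (measurable_id.const_mul _)

lemma measurable_fP (l : ℂ) : Measurable (fun x : ℝ => ‖pwSinc ((x:ℂ) - l)‖ ^ 2) := by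
  apply Measurable.pow_const
  apply Measurable.norm
  exact measurable_pwSinc.comp (Complex.measurable_ofReal.sub measurable_const)

lemma integrable_g1 (u : ℝ) : Integrable (fun x : ℝ => 2 / (1 + (x - u) ^ 2)) := by
  have h := (integrable_inv_one_add_sq.comp_sub_right u).const_mul 2
  refine h.congr (Filter.Eventually.of_forall fun x => ?_)
  simp [div_eq_mul_inv]

lemma integral_g1 (u : ℝ) : ∫ x : ℝ, 2 / (1 + (x - u) ^ 2) = 2 * Real.pi := by
  have h1 : ∫ x : ℝ, 2 / (1 + (x - u) ^ 2) = 2 * ∫ x : ℝ, (1 + (x - u) ^ 2)⁻¹ := by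
    rw [← integral_const_mul]
    congr 1
  rw [h1, integral_sub_right_eq_self (fun x : ℝ => (1 + x ^ 2)⁻¹) u,
    integral_univ_inv_one_add_sq]

lemma integrable_g2 (u v : ℝ) (hv : v ≠ 0) :
    Integrable (fun x : ℝ => ((x - u) ^ 2 + v ^ 2)⁻¹) := by
  have h := ((integrable_inv_one_add_sq.comp_div hv).comp_sub_right u).const_mul ((v ^ 2)⁻¹)
  refine h.congr (Filter.Eventually.of_forall fun x => ?_)
  have hv2 : (0:ℝ) < v ^ 2 := by positivity
  field_simp
  ring

lemma integral_g2 (u v : ℝ) (hv : 0 < v) :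
    ∫ x : ℝ, ((x - u) ^ 2 + v ^ 2)⁻¹ = Real.pi / v := by
  have key : ∀ x : ℝ, ((x - u) ^ 2 + v ^ 2)⁻¹ = (v ^ 2)⁻¹ * (1 + ((x - u) / v) ^ 2)⁻¹ := by
    intro x
    have hv2 : (0:ℝ) < v ^ 2 := by positivity
    field_simp
    ring
  simp_rw [key]
  rw [integral_const_mul, integral_sub_right_eq_self (fun x : ℝ => (1 + (x / v) ^ 2)⁻¹) u]
  have := MeasureTheory.Measure.integral_comp_div (fun y : ℝ => (1 + y ^ 2)⁻¹) v
  rw [this, integral_univ_inv_one_add_sq, smul_eq_mul, abs_of_pos hv]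
  field_simp

lemma integrable_GB (l : ℂ) : Integrable (GB l) := by
  unfold GB
  rcases eq_or_ne l.im 0 with hv | hv
  · have : (fun x : ℝ => 2 / (1 + (x - l.re) ^ 2) +
        (Real.sinh (Real.pi * |l.im|) ^ 2 / Real.pi ^ 2) * ((x - l.re) ^ 2 + |l.im| ^ 2)⁻¹)
        = fun x : ℝ => 2 / (1 + (x - l.re) ^ 2) := by
      funext x; rw [hv]; simp
    rw [this]
    exact integrable_g1 l.re
  · exact (integrable_g1 l.re).add
      (((integrable_g2 l.re |l.im| (abs_ne_zero.2 hv)).const_mul _))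

lemma integrable_fP (l : ℂ) : Integrable (fun x : ℝ => ‖pwSinc ((x:ℂ) - l)‖ ^ 2) := by
  refine (integrable_GB l).mono' (measurable_fP l).aestronglyMeasurable ?_
  refine Filter.Eventually.of_forall fun x => ?_
  rw [Real.norm_eq_abs, _root_.abs_of_nonneg (by positivity)]
  exact fP_le_G l x

lemma sincNormSq_le (l : ℂ) (hv : l.im ≠ 0) :
    sincNormSq l ≤ 2 * Real.pi + Real.sinh (Real.pi * |l.im|) ^ 2 / (Real.pi * |l.im|) := by
  have hva : (0:ℝ) < |l.im| := abs_pos.2 hv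
  have h1 : sincNormSq l ≤ ∫ x : ℝ, GB l x :=
    integral_mono (integrable_fP l) (integrable_GB l) (fP_le_G l)
  have h2 : ∫ x : ℝ, GB l x = 2 * Real.pi +
      (Real.sinh (Real.pi * |l.im|) ^ 2 / Real.pi ^ 2) * (Real.pi / |l.im|) := by
    unfold GB
    rw [integral_add (integrable_g1 l.re)
      ((integrable_g2 l.re |l.im| (ne_of_gt hva)).const_mul _),
      integral_g1, integral_const_mul, integral_g2 l.re |l.im| hva]
  rw [h2] at h1
  refine h1.trans (le_of_eq ?_)
  have hpi := Real.pi_pos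
  field_simp

lemma sincNormSq_le0 (l : ℂ) (hv : l.im = 0) : sincNormSq l ≤ 2 * Real.pi := by
  have h1 : sincNormSq l ≤ ∫ x : ℝ, GB l x :=
    integral_mono (integrable_fP l) (integrable_GB l) (fP_le_G l)
  have h2 : ∫ x : ℝ, GB l x = 2 * Real.pi := by
    unfold GB
    have : (fun x : ℝ => 2 / (1 + (x - l.re) ^ 2) +
        (Real.sinh (Real.pi * |l.im|) ^ 2 / Real.pi ^ 2) * ((x - l.re) ^ 2 + |l.im| ^ 2)⁻¹)
        = fun x : ℝ => 2 / (1 + (x - l.re) ^ 2) := by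
      funext x; rw [hv]; simp
    rw [this, integral_g1]
  rw [h2] at h1
  exact h1

lemma sincNormSq_pos (l : ℂ) : 0 < sincNormSq l := by
  rw [sincNormSq,
    integral_pos_iff_support_of_nonneg (fun x => by positivity) (integrable_fP l)]
  set f := fun x : ℝ => ‖pwSinc ((x:ℂ) - l)‖ ^ 2 with hf
  have hsub : (Function.support f)ᶜ ⊆ Set.range (fun k : ℤ => l.re + (k:ℝ)) := by
    intro x hx
    have hx0 : ‖pwSinc ((x:ℂ) - l)‖ ^ 2 = 0 := Function.notMem_support.1 hx
    have hw : (x:ℂ) - l ≠ 0 := by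
      intro h0
      rw [h0] at hx0
      rw [show pwSinc 0 = 1 by simp [pwSinc]] at hx0
      norm_num at hx0
    rw [fP_eq l x hw] at hx0
    have hne : (x - l.re) ^ 2 + |l.im| ^ 2 ≠ 0 := by
      intro h0
      have h1 : x - l.re = 0 := by nlinarith [sq_nonneg (x - l.re), sq_nonneg |l.im|]
      have h2 : |l.im| = 0 := by nlinarith [sq_nonneg (x - l.re), sq_nonneg |l.im|]
      exact (sub_ne_zero_iff' l x).1 hw ⟨by linarith, abs_eq_zero.1 h2⟩
    have hden : 0 < Real.pi ^ 2 * ((x - l.re) ^ 2 + |l.im| ^ 2) := by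
      have : 0 < (x - l.re) ^ 2 + |l.im| ^ 2 :=
        lt_of_le_of_ne (by positivity) (Ne.symm hne)
      positivity
    have hnum : Real.sin (Real.pi * (x - l.re)) = 0 := by
      have := div_eq_zero_iff.1 hx0
      rcases this with h | h
      · nlinarith [sq_nonneg (Real.sin (Real.pi * (x - l.re))),
          sq_nonneg (Real.sinh (Real.pi * |l.im|))]
      · exact absurd h (ne_of_gt hden)
    rcases Real.sin_eq_zero_iff.1 hnum with ⟨n, hn⟩
    refine ⟨n, ?_⟩
    have hpi := Real.pi_ne_zero
    have : (n:ℝ) = x - l.re := by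
      have hn' : Real.pi * (n:ℝ) = Real.pi * (x - l.re) := by linarith
      exact mul_left_cancel₀ Real.pi_ne_zero hn'
    show l.re + (n:ℝ) = x
    linarith
  by_contra h0
  push_neg at h0
  have hz : volume (Function.support f) = 0 := le_antisymm h0 zero_le
  have hc : volume ((Function.support f)ᶜ) = 0 :=
    le_antisymm (le_trans (measure_mono hsub) ((Set.countable_range _).measure_zero volume).le) zero_le
  have : volume (Set.univ : Set ℝ) ≤ 0 := by
    calc volume (Set.univ : Set ℝ)
        ≤ volume (Function.support f) + volume ((Function.support f)ᶜ) := by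
          rw [show (Set.univ : Set ℝ) = Function.support f ∪ (Function.support f)ᶜ by
            simp [Set.union_compl_self]]
          exact measure_union_le _ _
      _ = 0 := by rw [hz, hc, add_zero]
  simp [Real.volume_univ] at this

lemma xseq_close (n : ℤ) : |xseq n - n| ≤ 1/8 := by
  unfold xseq
  split <;> rw [abs_le] <;> constructor <;> linarith

lemma xseq_succ_sub (n : ℤ) : xseq (n+1) - xseq n = 3/4 ∨ xseq (n+1) - xseq n = 5/4 := by
  unfold xseq
  rcases Int.even_or_odd n with he | ho
  · left
    have e2 : ¬ Even (n+1) := by rw [Int.even_add_one]; simpa using he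
    rw [if_neg e2, if_pos he]; push_cast; ring
  · right
    have e1 : ¬ Even n := Int.not_even_iff_odd.2 ho
    have e2 : Even (n+1) := Int.even_add_one.2 e1
    rw [if_pos e2, if_neg e1]; push_cast; ring

lemma sin_pi_eighth : (0.377 : ℝ) ≤ Real.sin (Real.pi/8) := by
  have h1 := Real.pi_gt_d6
  have h2 := Real.pi_lt_d2
  have h3 : (0:ℝ) < Real.pi/8 := by linarith
  have h4 : Real.pi/8 ≤ 1 := by linarith
  have h5 := Real.sin_gt_sub_cube h3
  nlinarith [sq_nonneg (Real.pi/8)]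

lemma sin_sq_ge_of_dist (a : ℝ) (h : ∀ m : ℤ, 1/8 ≤ |a - m|) :
    1/8 ≤ Real.sin (Real.pi * a) ^ 2 := by
  have hpi := Real.pi_pos
  set r := round a with hr
  have h1 : 1/8 ≤ |a - r| := h r
  have h2 : |a - r| ≤ 1/2 := abs_sub_round a
  have key : Real.sin (Real.pi * a) ^ 2 = Real.sin (Real.pi * (a - r)) ^ 2 := by
    have he : Real.pi * a = Real.pi * (a - r) + r * Real.pi := by ring
    rw [he, Real.sin_add_int_mul_pi, mul_pow, ← zpow_natCast ((-1:ℝ)^r), ← zpow_mul,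
      Even.neg_one_zpow ⟨r, by ring⟩, one_mul]
  have keyabs : Real.sin (Real.pi * (a - r)) ^ 2 = Real.sin (Real.pi * |a - r|) ^ 2 := by
    rcases abs_cases (a - r) with ⟨hc, _⟩ | ⟨hc, _⟩
    · rw [hc]
    · rw [hc, mul_neg, Real.sin_neg, neg_sq]
  rw [key, keyabs]
  have hmono : Real.sin (Real.pi/8) ≤ Real.sin (Real.pi * |a - r|) := by
    apply Real.strictMonoOn_sin.monotoneOn
    · constructor <;> [linarith; linarith]
    · have hab : 0 ≤ |a - r| := abs_nonneg _
      constructor <;> nlinarith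
    · nlinarith
  have hs := sin_pi_eighth
  nlinarith

lemma exists_good_index (u : ℝ) : ∃ n : ℤ, n ≠ 0 ∧ (xseq n - u)^2 ≤ 10 ∧
    1/8 ≤ Real.sin (Real.pi * (xseq n - u)) ^ 2 := by
  obtain ⟨n, hn0, hn10, hb1, hb2⟩ :
      ∃ n : ℤ, n ≠ 0 ∧ n + 1 ≠ 0 ∧ |(n:ℝ) - u| ≤ 3 ∧ |(n:ℝ) + 1 - u| ≤ 3 := by
    set k : ℤ := ⌊u⌋ with hk
    have hk1 : (k:ℝ) ≤ u := Int.floor_le u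
    have hk2 : u < (k:ℝ) + 1 := Int.lt_floor_add_one u
    by_cases h : -1 ≤ k
    · refine ⟨k + 2, by omega, by omega, ?_, ?_⟩ <;>
        · rw [abs_le]; push_cast; constructor <;> linarith
    · refine ⟨k - 2, by omega, by omega, ?_, ?_⟩ <;>
        · rw [abs_le]; push_cast; constructor <;> linarith
  have sqb : ∀ m : ℤ, |(m:ℝ) - u| ≤ 3 → (xseq m - u)^2 ≤ 10 := by
    intro m hm
    have h1 := xseq_close m
    have h2 : |xseq m - u| ≤ 25/8 := by
      have := abs_sub_abs_le_abs_sub (xseq m - u) ((m:ℝ) - u)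
      have h3 : |xseq m - u - ((m:ℝ) - u)| = |xseq m - m| := by ring_nf
      rw [abs_le] at h1 hm ⊢
      constructor <;> [nlinarith; nlinarith]
    calc (xseq m - u)^2 = |xseq m - u|^2 := (_root_.sq_abs _).symm
      _ ≤ (25/8)^2 := by nlinarith [abs_nonneg (xseq m - u)]
      _ ≤ 10 := by norm_num
  by_cases hgood : ∀ m : ℤ, 1/8 ≤ |xseq n - u - m|
  · exact ⟨n, hn0, sqb n hb1, sin_sq_ge_of_dist _ hgood⟩
  · push_neg at hgood
    obtain ⟨m1, hm1⟩ := hgood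
    have hsq : (xseq (n+1) - u)^2 ≤ 10 := by
      apply sqb (n+1)
      rw [show ((n+1:ℤ):ℝ) = (n:ℝ)+1 by push_cast; ring]
      exact hb2
    refine ⟨n + 1, hn10, hsq, ?_⟩
    apply sin_sq_ge_of_dist
    intro m2
    by_contra hc
    push_neg at hc
    rw [abs_lt] at hm1 hc
    rcases xseq_succ_sub n with hd | hd
    · have hgt : (0:ℤ) < m2 - m1 := by
        have : (0:ℝ) < ((m2 - m1 : ℤ):ℝ) := by push_cast; linarith
        exact_mod_cast this
      have hlt : (m2 - m1:ℤ) < 1 := by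
        have : ((m2 - m1 : ℤ):ℝ) < 1 := by push_cast; linarith
        exact_mod_cast this
      omega
    · have hgt : (1:ℤ) < m2 - m1 := by
        have : (1:ℝ) < ((m2 - m1 : ℤ):ℝ) := by push_cast; linarith
        exact_mod_cast this
      have hlt : (m2 - m1:ℤ) < 2 := by
        have : ((m2 - m1 : ℤ):ℝ) < 2 := by push_cast; linarith
        exact_mod_cast this
      omega

lemma summable_fP (l : ℂ) :
    Summable (fun n : {n : ℤ // n ≠ 0} => ‖pwSinc ((xseq n.1 : ℂ) - l)‖ ^ 2) := by
  have hg : Summable (fun n : ℤ => ‖pwSinc ((xseq n : ℂ) - l)‖ ^ 2) := by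
    set h : ℝ := Real.sinh (Real.pi * |l.im|) ^ 2 with hh
    have hh0 : 0 ≤ h := sq_nonneg _
    set C : ℝ := 4 * (1 + h) / Real.pi ^ 2 with hC
    have hpi := Real.pi_pos
    apply Summable.of_norm_bounded_eventually (g := fun n : ℤ => C * (1 / (n:ℝ) ^ 2))
      ((Real.summable_one_div_int_pow.2 one_lt_two).mul_left C)
    rw [Filter.eventually_cofinite]
    set N : ℤ := 2 * ⌈|l.re|⌉ + 4 with hN
    apply Set.Finite.subset (Set.finite_Icc (-N) N)
    intro n hn
    simp only [Set.mem_setOf_eq, not_le] at hn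
    by_contra hno
    simp only [Finset.coe_Icc, Set.mem_Icc, not_and_or, not_le] at hno
    have hN4 : (4:ℤ) ≤ N := by
      have := Int.ceil_nonneg (abs_nonneg l.re)
      omega
    have habs : (N:ℝ) < |(n:ℝ)| := by
      rcases hno with h1 | h1
      · have hc1 : (n:ℝ) < -(N:ℝ) := by exact_mod_cast h1
        have hneg : (n:ℝ) ≤ 0 := by
          have : n ≤ 0 := by omega
          exact_mod_cast this
        rw [_root_.abs_of_nonpos hneg]
        linarith
      · have hpos : (0:ℝ) ≤ (n:ℝ) := by
          have : 0 ≤ n := by omega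
          exact_mod_cast this
        rw [_root_.abs_of_nonneg hpos]
        exact_mod_cast h1
    have hNre : 2 * |l.re| + 4 ≤ (N:ℝ) := by
      rw [hN]
      push_cast
      have := Int.le_ceil |l.re|
      linarith
    have htn : |(n:ℝ)| / 2 ≤ |xseq n - l.re| := by
      have h1 := xseq_close n
      have h2 := abs_sub_abs_le_abs_sub ((n:ℝ) - l.re) ((n:ℝ) - xseq n)
      have h3 : |(n:ℝ) - xseq n| = |xseq n - (n:ℝ)| := abs_sub_comm _ _
      have h4 : |(n:ℝ)| - |l.re| ≤ |(n:ℝ) - l.re| := by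
        have := abs_sub_abs_le_abs_sub (n:ℝ) l.re
        linarith [le_abs_self ((n:ℝ) - l.re)]
      have h5 : |(n:ℝ) - l.re - ((n:ℝ) - xseq n)| = |xseq n - l.re| := by ring_nf
      rw [h5] at h2
      rw [h3] at h2
      linarith [abs_nonneg ((n:ℝ) - l.re)]
    have ht2 : (0:ℝ) < |xseq n - l.re| := by
      have : (0:ℝ) < (N:ℝ)/2 := by positivity
      nlinarith [abs_nonneg l.re]
    have hw : (xseq n : ℂ) - l ≠ 0 := by
      rw [sub_ne_zero_iff']
      rintro ⟨h1, _⟩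
      rw [h1] at ht2
      simp at ht2
    have hsq0 : (0:ℝ) < (xseq n - l.re)^2 := by
      nlinarith [_root_.sq_abs (xseq n - l.re)]
    have hp2 : (0:ℝ) < Real.pi ^ 2 := by positivity
    have hden : (0:ℝ) < Real.pi ^ 2 * ((xseq n - l.re) ^ 2 + |l.im| ^ 2) := by
      nlinarith [sq_nonneg |l.im|]
    have hn4 : (4:ℝ) ≤ |(n:ℝ)| := le_trans (by exact_mod_cast hN4) habs.le
    have hn2 : (0:ℝ) < (n:ℝ)^2 := by
      nlinarith [_root_.sq_abs (n:ℝ)]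
    have h6 : (n:ℝ)^2/4 ≤ (xseq n - l.re)^2 := by
      nlinarith [_root_.sq_abs (n:ℝ), _root_.sq_abs (xseq n - l.re), abs_nonneg (n:ℝ),
        abs_nonneg (xseq n - l.re)]
    refine absurd hn (not_lt.2 ?_)
    rw [Real.norm_eq_abs, _root_.abs_of_nonneg (by positivity), fP_eq l _ hw, ← hh]
    have hstep : (Real.sin (Real.pi * (xseq n - l.re)) ^ 2 + h)
        / (Real.pi ^ 2 * ((xseq n - l.re) ^ 2 + |l.im| ^ 2))
        ≤ (1 + h) / (Real.pi ^ 2 * ((n:ℝ)^2/4)) := by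
      apply div_le_div₀ (by linarith)
      · nlinarith [Real.sin_sq_le_one (Real.pi * (xseq n - l.re))]
      · positivity
      · nlinarith [sq_nonneg |l.im|]
    refine hstep.trans (le_of_eq ?_)
    rw [hC]
    field_simp
  exact hg.subtype _

lemma tsum_ge_caseB (l : ℂ) (hv : 1 ≤ |l.im|) :
    Real.sinh (Real.pi * |l.im|) ^ 2 / (11 * Real.pi ^ 2 * |l.im|)
      ≤ ∑' n : {n : ℤ // n ≠ 0}, ‖pwSinc ((xseq n.1 : ℂ) - l)‖ ^ 2 := by
  have hpi := Real.pi_pos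
  set v : ℝ := |l.im| with hvdef
  set hS : ℝ := Real.sinh (Real.pi * v) ^ 2 with hSdef
  have hS0 : 0 ≤ hS := sq_nonneg _
  have hv0 : (0:ℝ) < v := by linarith
  set M : ℤ := ⌈v⌉ with hM
  have hvM : v ≤ (M:ℝ) := Int.le_ceil v
  have hMv : (M:ℝ) < v + 1 := Int.ceil_lt_add_one v
  have hM1 : (1:ℤ) ≤ M := by
    have : (1:ℝ) ≤ (M:ℝ) := by linarith
    exact_mod_cast this
  set k : ℤ := ⌊l.re⌋ with hk
  have hk1 : (k:ℝ) ≤ l.re := Int.floor_le _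
  have hk2 : l.re < (k:ℝ) + 1 := Int.lt_floor_add_one _
  set e : ℤ → ℤ := fun j => if -1 ≤ k then k + 1 + j else k - j with he
  have hene : ∀ j ∈ Finset.Icc (1:ℤ) M, e j ≠ 0 := by
    intro j hj
    rw [Finset.mem_Icc] at hj
    rw [he]
    by_cases hcase : -1 ≤ k <;> simp only [if_pos, if_neg, hcase, if_true, if_false] <;> omega
  have hebound : ∀ j ∈ Finset.Icc (1:ℤ) M, |(e j : ℝ) - l.re| ≤ (M:ℝ) + 1 := by
    intro j hj
    rw [Finset.mem_Icc] at hj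
    have hj1 : (1:ℝ) ≤ (j:ℝ) := by exact_mod_cast hj.1
    have hj2 : (j:ℝ) ≤ (M:ℝ) := by exact_mod_cast hj.2
    rw [he]
    by_cases hcase : -1 ≤ k
    · simp only [if_pos hcase]
      push_cast
      rw [abs_le]
      constructor <;> linarith
    · simp only [if_neg hcase]
      push_cast
      rw [abs_le]
      constructor <;> linarith
  have hterm : ∀ j ∈ Finset.Icc (1:ℤ) M,
      hS / (11 * Real.pi ^ 2 * v ^ 2) ≤ ‖pwSinc ((xseq (e j) : ℂ) - l)‖ ^ 2 := by
    intro j hj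
    have hw : (xseq (e j) : ℂ) - l ≠ 0 := by
      rw [sub_ne_zero_iff']
      rintro ⟨-, h2⟩
      rw [hvdef] at hv0
      rw [h2] at hv0
      simp at hv0
    rw [fP_eq l _ hw, ← hvdef, ← hSdef]
    have hb : (xseq (e j) - l.re) ^ 2 + v ^ 2 ≤ 11 * v ^ 2 := by
      have h1 := xseq_close (e j)
      have h2 := hebound j hj
      have h3 : |xseq (e j) - l.re| ≤ (M:ℝ) + 1 + 1/8 := by
        have := abs_sub_abs_le_abs_sub (xseq (e j) - l.re) (xseq (e j) - (e j : ℝ))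
        have h5 : xseq (e j) - l.re - (xseq (e j) - (e j:ℝ)) = (e j : ℝ) - l.re := by ring
        rw [h5] at this
        linarith [abs_nonneg (xseq (e j) - l.re), le_abs_self (xseq (e j) - l.re),
          neg_abs_le (xseq (e j) - l.re)]
      have h4 : |xseq (e j) - l.re| ≤ 25/8 * v := by
        have : (M:ℝ) + 1 + 1/8 ≤ 25/8 * v := by linarith
        linarith
      nlinarith [_root_.sq_abs (xseq (e j) - l.re), abs_nonneg (xseq (e j) - l.re)]
    apply div_le_div₀ (by positivity)
    · nlinarith [sq_nonneg (Real.sin (Real.pi * (xseq (e j) - l.re)))]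
    · positivity
    · nlinarith
  -- build the finset in the subtype
  set ψ : ℤ → {n : ℤ // n ≠ 0} := fun j => if hj : e j ≠ 0 then ⟨e j, hj⟩ else ⟨1, one_ne_zero⟩
    with hψ
  set T : Finset {n : ℤ // n ≠ 0} := (Finset.Icc (1:ℤ) M).image ψ with hT
  have hinj : Set.InjOn ψ (Finset.Icc (1:ℤ) M) := by
    intro i hi j hj hij
    rw [hψ] at hij
    simp only [dif_pos (hene i hi), dif_pos (hene j hj)] at hij
    have : e i = e j := by
      have := congrArg Subtype.val hij
      simpa using this
    rw [he] at this
    by_cases hcase : -1 ≤ k <;> simp only [if_pos, if_neg, hcase, if_true, if_false] at this <;>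
      omega
  have hsum1 : ∑ n ∈ T, ‖pwSinc ((xseq n.1 : ℂ) - l)‖ ^ 2
      = ∑ j ∈ Finset.Icc (1:ℤ) M, ‖pwSinc ((xseq ((ψ j).1) : ℂ) - l)‖ ^ 2 :=
    Finset.sum_image (fun i hi j hj hij => hinj hi hj hij)
  have hsum2 : (M:ℝ) * (hS / (11 * Real.pi ^ 2 * v ^ 2))
      ≤ ∑ j ∈ Finset.Icc (1:ℤ) M, ‖pwSinc ((xseq ((ψ j).1) : ℂ) - l)‖ ^ 2 := by
    have hcard : ((Finset.Icc (1:ℤ) M).card : ℝ) = (M:ℝ) := by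
      rw [Int.card_Icc, show M + 1 - 1 = M by ring]
      exact_mod_cast congrArg (fun z : ℤ => (z:ℝ)) (Int.toNat_of_nonneg (by omega))
    calc (M:ℝ) * (hS / (11 * Real.pi ^ 2 * v ^ 2))
        = ∑ _j ∈ Finset.Icc (1:ℤ) M, (hS / (11 * Real.pi ^ 2 * v ^ 2)) := by
          rw [Finset.sum_const, nsmul_eq_mul, hcard]
      _ ≤ _ := by
          apply Finset.sum_le_sum
          intro j hj
          have h1 := hterm j hj
          have h2 : (ψ j).1 = e j := by rw [hψ]; simp only [dif_pos (hene j hj)]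
          rw [h2]
          exact h1
  have htsum : ∑ n ∈ T, ‖pwSinc ((xseq n.1 : ℂ) - l)‖ ^ 2
      ≤ ∑' n : {n : ℤ // n ≠ 0}, ‖pwSinc ((xseq n.1 : ℂ) - l)‖ ^ 2 :=
    Summable.sum_le_tsum T (fun i _ => by positivity) (summable_fP l)
  have hfinal : hS / (11 * Real.pi ^ 2 * v)
      ≤ (M:ℝ) * (hS / (11 * Real.pi ^ 2 * v ^ 2)) := by
    have h1 : hS / (11 * Real.pi ^ 2 * v) = v * (hS / (11 * Real.pi ^ 2 * v ^ 2)) := by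
      field_simp
    rw [h1]
    apply mul_le_mul_of_nonneg_right hvM (by positivity)
  linarith [hsum1 ▸ hsum2]

lemma tsum_ge_caseA (l : ℂ) (hv : |l.im| ≤ 1) :
    1 / (88 * Real.pi ^ 2) ≤ ∑' n : {n : ℤ // n ≠ 0}, ‖pwSinc ((xseq n.1 : ℂ) - l)‖ ^ 2 := by
  have hpi := Real.pi_pos
  obtain ⟨n, hn0, hsq, hsin⟩ := exists_good_index l.re
  have hw : (xseq n : ℂ) - l ≠ 0 := by
    rw [sub_ne_zero_iff']
    rintro ⟨h1, -⟩
    rw [h1, sub_self, mul_zero, Real.sin_zero] at hsin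
    norm_num at hsin
  have hterm : 1 / (88 * Real.pi ^ 2) ≤ ‖pwSinc ((xseq n : ℂ) - l)‖ ^ 2 := by
    rw [fP_eq l _ hw]
    have heq : (1:ℝ) / (88 * Real.pi ^ 2) = (1/8) / (11 * Real.pi ^ 2) := by
      field_simp
      ring
    rw [heq]
    have hpos : 0 < (xseq n - l.re)^2 + |l.im|^2 := by
      rcases lt_or_eq_of_le (by positivity : (0:ℝ) ≤ (xseq n - l.re)^2 + |l.im|^2) with h | h
      · exact h
      · exfalso
        have h1 : xseq n - l.re = 0 := by
          nlinarith [sq_nonneg (xseq n - l.re), sq_nonneg |l.im|]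
        rw [h1, mul_zero, Real.sin_zero] at hsin
        norm_num at hsin
    apply div_le_div₀ (by positivity)
    · nlinarith [sq_nonneg (Real.sinh (Real.pi * |l.im|))]
    · exact mul_pos (by positivity) hpos
    · nlinarith [mul_nonneg (sq_nonneg Real.pi)
        (show (0:ℝ) ≤ 11 - (xseq n - l.re)^2 - |l.im|^2 by nlinarith [abs_nonneg l.im])]
  calc 1 / (88 * Real.pi ^ 2) ≤ ‖pwSinc ((xseq n : ℂ) - l)‖ ^ 2 := hterm
    _ = ∑ m ∈ ({(⟨n, hn0⟩ : {n : ℤ // n ≠ 0})} : Finset {n : ℤ // n ≠ 0}),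
        ‖pwSinc ((xseq m.1 : ℂ) - l)‖ ^ 2 := by rw [Finset.sum_singleton]
    _ ≤ _ := Summable.sum_le_tsum _ (fun i _ => by positivity) (summable_fP l)

lemma sinh_le_mul_exp (y : ℝ) (hy : 0 ≤ y) : Real.sinh y ≤ y * Real.exp y := by
  rw [Real.sinh_eq]
  have h1 : Real.exp (-y) = Real.exp y * Real.exp (-2*y) := by
    rw [← Real.exp_add]; ring_nf
  have h2 : (-2*y) + 1 ≤ Real.exp (-2*y) := Real.add_one_le_exp _
  nlinarith [Real.exp_pos y]

lemma exp_seven_le : Real.exp 7 ≤ 1097 := by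
  have h1 : Real.exp 7 = Real.exp 1 ^ (7:ℕ) := by
    rw [← Real.exp_nat_mul]
    norm_num
  rw [h1]
  calc Real.exp 1 ^ (7:ℕ) ≤ 2.7182818286 ^ (7:ℕ) :=
        pow_le_pow_left₀ (Real.exp_pos 1).le Real.exp_one_lt_d9.le 7
    _ ≤ 1097 := by norm_num

lemma exp_three_ge : (20.08:ℝ) ≤ Real.exp 3 := by
  have h1 : Real.exp 3 = Real.exp 1 ^ (3:ℕ) := by
    rw [← Real.exp_nat_mul]
    norm_num
  rw [h1]
  calc (20.08:ℝ) ≤ 2.7182818283 ^ (3:ℕ) := by norm_num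
    _ ≤ Real.exp 1 ^ (3:ℕ) := pow_le_pow_left₀ (by norm_num) Real.exp_one_gt_d9.le 3

lemma QA (l : ℂ) (hv : |l.im| ≤ 1) : sincNormSq l ≤ 3465 := by
  have hπ1 := Real.pi_gt_d6
  have hπ2 := Real.pi_lt_d2
  rcases eq_or_ne l.im 0 with h0 | h0
  · have := sincNormSq_le0 l h0
    linarith
  · have h1 := sincNormSq_le l h0
    set v : ℝ := |l.im| with hv'
    have hv0 : (0:ℝ) < v := abs_pos.2 h0
    have hpv : (0:ℝ) < Real.pi * v := by positivity
    have hsinh := sinh_le_mul_exp (Real.pi * v) hpv.le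
    have hsinh0 : 0 ≤ Real.sinh (Real.pi * v) := Real.sinh_nonneg_iff.2 (by positivity)
    have hee : Real.exp (Real.pi * v) ^ 2 = Real.exp (2 * (Real.pi * v)) := by
      rw [sq, ← Real.exp_add]
      ring_nf
    have hexp7 : Real.exp (2 * (Real.pi * v)) ≤ Real.exp 7 :=
      Real.exp_le_exp.2 (by nlinarith)
    have hkey : Real.sinh (Real.pi * v) ^ 2 / (Real.pi * v)
        ≤ Real.pi * v * Real.exp (2 * (Real.pi * v)) := by
      rw [div_le_iff₀ hpv]
      have hsq : Real.sinh (Real.pi * v) ^ 2 ≤ (Real.pi * v * Real.exp (Real.pi * v)) ^ 2 :=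
        pow_le_pow_left₀ hsinh0 hsinh 2
      have hsq2 : (Real.pi * v * Real.exp (Real.pi * v)) ^ 2
          = Real.pi * v * Real.exp (2 * (Real.pi * v)) * (Real.pi * v) := by
        rw [mul_pow, hee]
        ring
      linarith
    have hfin : Real.pi * v * Real.exp (2 * (Real.pi * v)) ≤ 3.15 * 1097 := by
      have he7 := exp_seven_le
      have h315 : Real.pi * v ≤ 3.15 := by nlinarith
      have := mul_le_mul h315 (hexp7.trans he7) (Real.exp_pos _).le (by norm_num : (0:ℝ) ≤ 3.15)
      linarith
    linarith

lemma QB (l : ℂ) (hv : 1 ≤ |l.im|) :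
    sincNormSq l ≤ 2 * (Real.sinh (Real.pi * |l.im|) ^ 2 / (Real.pi * |l.im|)) := by
  have hπ1 := Real.pi_gt_d6
  have hπ2 := Real.pi_lt_d2
  have h0 : l.im ≠ 0 := by
    intro h
    rw [h] at hv
    simp at hv
    linarith
  have h1 := sincNormSq_le l h0
  set v : ℝ := |l.im| with hv'
  have hv0 : (0:ℝ) < v := by linarith
  have hpv : (0:ℝ) < Real.pi * v := by positivity
  have hs1 : Real.pi * v ≤ Real.sinh (Real.pi * v) := (Real.self_lt_sinh_iff.2 hpv).le
  have hs2 : (9.5:ℝ) ≤ Real.sinh (Real.pi * v) := by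
    have hmono : Real.sinh Real.pi ≤ Real.sinh (Real.pi * v) :=
      Real.sinh_le_sinh.2 (by nlinarith)
    have hsp : (9.5:ℝ) ≤ Real.sinh Real.pi := by
      rw [Real.sinh_eq]
      have h2 : Real.exp 3 ≤ Real.exp Real.pi := Real.exp_le_exp.2 (by linarith)
      have h3 : Real.exp (-Real.pi) ≤ 1 := by
        rw [← Real.exp_zero]
        exact Real.exp_le_exp.2 (by linarith)
      have h4 := exp_three_ge
      linarith
    linarith
  have hkey : 2 * Real.pi ≤ Real.sinh (Real.pi * v) ^ 2 / (Real.pi * v) := by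
    rw [le_div_iff₀ hpv]
    nlinarith
  linarith

end PWAux

open PWAux in
/-- The `L²(μ)` norms (`μ = Σ_{n≠0} δ_{x_n}`) of the normalized Paley–Wiener reproducing
kernels `K_λ = c_λ sinc(π(·-λ))` are uniformly bounded below. -/
theorem pw_normalized_kernels_bounded_below :
    ∃ δ > (0:ℝ), ∀ l : ℂ,
      δ ≤ ∑' n : {n : ℤ // n ≠ 0}, (pwC l * ‖pwSinc ((xseq n.1 : ℂ) - l)‖) ^ 2 := by
  have hπ1 := Real.pi_gt_d6
  have hπ2 := Real.pi_lt_d2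
  refine ⟨1/10^7, by norm_num, fun l => ?_⟩
  have hQ := sincNormSq_pos l
  have hrw : ∀ n : {n : ℤ // n ≠ 0}, (pwC l * ‖pwSinc ((xseq n.1 : ℂ) - l)‖) ^ 2
      = (sincNormSq l)⁻¹ * ‖pwSinc ((xseq n.1 : ℂ) - l)‖ ^ 2 := by
    intro n
    rw [mul_pow, pwC, div_pow, one_pow, Real.sq_sqrt hQ.le, one_div]
  simp_rw [hrw]
  rw [tsum_mul_left, inv_mul_eq_div, le_div_iff₀ hQ]
  set S := ∑' n : {n : ℤ // n ≠ 0}, ‖pwSinc ((xseq n.1 : ℂ) - l)‖ ^ 2 with hS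
  rcases le_total |l.im| 1 with hv | hv
  · have h1 := tsum_ge_caseA l hv
    have h2 := QA l hv
    have h3 : (1:ℝ)/880 ≤ 1 / (88 * Real.pi ^ 2) := by
      rw [div_le_div_iff₀ (by norm_num) (by positivity)]
      nlinarith
    nlinarith
  · have h1 := tsum_ge_caseB l hv
    have h2 := QB l hv
    set v : ℝ := |l.im| with hv'
    have hv0 : (0:ℝ) < v := by linarith
    have hh0 : (0:ℝ) ≤ Real.sinh (Real.pi * v) ^ 2 := sq_nonneg _
    have heq : Real.sinh (Real.pi * v) ^ 2 / (11 * Real.pi ^ 2 * v)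
        = (1/(11*Real.pi)) * (Real.sinh (Real.pi * v) ^ 2 / (Real.pi * v)) := by
      field_simp
    have hd0 : (0:ℝ) ≤ Real.sinh (Real.pi * v) ^ 2 / (Real.pi * v) := by positivity
    calc (1:ℝ)/10^7 * sincNormSq l
        ≤ (1:ℝ)/10^7 * (2 * (Real.sinh (Real.pi * v) ^ 2 / (Real.pi * v))) := by
          apply mul_le_mul_of_nonneg_left h2 (by norm_num)
      _ = (2/10^7) * (Real.sinh (Real.pi * v) ^ 2 / (Real.pi * v)) := by ring
      _ ≤ (1/(11*Real.pi)) * (Real.sinh (Real.pi * v) ^ 2 / (Real.pi * v)) := by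
          apply mul_le_mul_of_nonneg_right _ hd0
          rw [div_le_div_iff₀ (by norm_num) (by positivity)]
          nlinarith
      _ = Real.sinh (Real.pi * v) ^ 2 / (11 * Real.pi ^ 2 * v) := heq.symm
      _ ≤ S := h1
end
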